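/- arXiv:0711.3054 — 3 statements merged into one kernel-verified Lean document; each statement's English description precedes it below -/
import Mathlib

section
/- Let S̃_∞ = ∪_{n≥1} S̃_n (via the natural embeddings S̃_n ⊆ S̃_{n+1}) with θ : S̃_∞ → S_∞ the induced homomorphism, and call an element a ∈ S̃_∞ even split if the modified cycle type of θ(a) has all parts even. Fix r ≥ 1 and let 𝒞 be an orbit of the simultaneous conjugation action of S̃_∞ on r-tuples of even split elements of S̃_∞, and let N(𝒞) be the number of points of ℕ moved by at least one of θ(x_1), …, θ(x_r), for any (x_1, …, x_r) ∈ 𝒞 (this number is independent of the choice). Then: (i) 𝒞 ∩ (S̃_n × ⋯ × S̃_n) is empty if n < N(𝒞); (ii) if n ≥ N(𝒞) it is a single orbit of the simultaneous conjugation action of S̃_n; and (iii) there is a positive rational number k(𝒞), independent of n, such that the number of r-tuples in 𝒞 ∩ (S̃_n × ⋯ × S̃_n) equals n(n−1)⋯(n − N(𝒞) + 1)/k(𝒞) for all n ≥ N(𝒞). -/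
set_option linter.unusedSectionVars false
set_option maxHeartbeats 1000000


/-- Generators of `S̃_∞`: `Sum.inl i` is `t_{i+1}` and `Sum.inr ()` is `z`. -/
abbrev SpinGenInf := Sum ℕ Unit

/-- The free-group generator `t_{i+1}`. -/
def TfI (i : ℕ) : FreeGroup SpinGenInf := FreeGroup.of (Sum.inl i)

/-- The free-group generator `z`. -/
def ZfI : FreeGroup SpinGenInf := FreeGroup.of (Sum.inr ())

/-- The defining relators of `S̃_∞`. -/
def spinRelInf : Set (FreeGroup SpinGenInf) :=
  {w | w = ZfI ^ 2
    ∨ (∃ i, w = ZfI * TfI i * ZfI⁻¹ * (TfI i)⁻¹)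
    ∨ (∃ i, w = (TfI i) ^ 2 * ZfI⁻¹)
    ∨ (∃ i j : ℕ, i + 1 = j ∧
        w = TfI i * TfI j * TfI i * (TfI j * TfI i * TfI j)⁻¹)
    ∨ (∃ i j : ℕ, (i + 1 < j ∨ j + 1 < i) ∧
        w = TfI j * TfI i * (ZfI * TfI i * TfI j)⁻¹)}

/-- `S̃_∞ = ∪_n S̃_n`, as a presented group on the generators `t_1, t_2, …` and `z`. -/
abbrev SpinCoverInf := PresentedGroup spinRelInf

/-- The generator `t_{i+1}` of `S̃_∞`. -/
def tgi (i : ℕ) : SpinCoverInf := PresentedGroup.of (Sum.inl i)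

/-- The central element `z` of `S̃_∞`. -/
def zi : SpinCoverInf := PresentedGroup.of (Sum.inr ())

/-- The subgroup `S̃_n ⊆ S̃_∞`, generated by `z` and `t_1, …, t_{n-1}`. -/
def SpinSub (n : ℕ) : Subgroup SpinCoverInf :=
  Subgroup.closure ({zi} ∪ {x | ∃ i : ℕ, i + 1 < n ∧ x = tgi i})

/-- An element `a ∈ S̃_∞` is even split if all parts of the modified cycle type of
`θ(a)` are even, i.e. every nontrivial cycle of `θ(a)` has odd length. -/
def EvenSplit (θ : SpinCoverInf →* Equiv.Perm ℕ) (a : SpinCoverInf) : Prop :=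
  ∀ x : ℕ, θ a x ≠ x → Odd (Set.ncard {y : ℕ | (θ a).SameCycle x y})


open Equiv Set

namespace SpinAux

/-- Permutations of `ℕ` fixing every point outside `A`. -/
def pfix (A : Set ℕ) : Subgroup (Equiv.Perm ℕ) where
  carrier := {σ | ∀ p ∉ A, σ p = p}
  one_mem' := by intro p _; rfl
  mul_mem' := by
    intro σ τ hσ hτ p hp
    simp only [Equiv.Perm.mul_apply, Set.mem_setOf_eq] at *
    rw [hτ p hp, hσ p hp]
  inv_mem' := by
    intro σ hσ p hp
    exact Equiv.Perm.inv_eq_iff_eq.mpr (hσ p hp).symm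

lemma mem_pfix {A : Set ℕ} {σ : Equiv.Perm ℕ} : σ ∈ pfix A ↔ ∀ p ∉ A, σ p = p := Iff.rfl

lemma pfix_mono {A B : Set ℕ} (h : A ⊆ B) : pfix A ≤ pfix B := by
  intro σ hσ p hp
  exact hσ p fun hc => hp (h hc)

lemma pfix_mapsTo {A : Set ℕ} {σ : Equiv.Perm ℕ} (hσ : σ ∈ pfix A) {p : ℕ} (hp : p ∈ A) :
    σ p ∈ A := by
  by_contra hc
  have h1 : σ (σ p) = σ p := hσ _ hc
  have h2 : σ p = p := σ.injective h1
  rw [h2] at hc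
  exact hc hp

lemma pfix_inv_mapsTo {A : Set ℕ} {σ : Equiv.Perm ℕ} (hσ : σ ∈ pfix A) {p : ℕ} (hp : p ∈ A) :
    σ⁻¹ p ∈ A := pfix_mapsTo (inv_mem hσ) hp

/-- `pfix A` is isomorphic (as a type) to `Perm ↥A`. -/
noncomputable def pfixEquiv (A : Set ℕ) : ↥(pfix A) ≃ Equiv.Perm ↥A := by
  classical
  refine
    { toFun := fun σ => Equiv.Perm.subtypePerm σ.1 (fun x => ?_)
      invFun := fun e => ⟨e.extendDomain (Equiv.refl ↥A), ?_⟩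
      left_inv := ?_
      right_inv := ?_ }
  · refine Iff.symm ⟨?_, ?_⟩
    · exact fun h => pfix_mapsTo σ.2 h
    · intro h
      by_contra hc
      have h1 : (σ.1) x = x := σ.2 x hc
      rw [h1] at h
      exact hc h
  · intro p hp
    exact Equiv.Perm.extendDomain_apply_not_subtype _ _ hp
  · rintro ⟨σ, hσ⟩
    ext p
    by_cases hp : p ∈ A
    · simp only [Subgroup.coe_mk]
      rw [Equiv.Perm.extendDomain_apply_subtype _ _ hp]
      rfl
    · simp only [Subgroup.coe_mk]
      rw [Equiv.Perm.extendDomain_apply_not_subtype _ _ hp, hσ p hp]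
  · intro e
    ext ⟨p, hp⟩
    simp only [Equiv.Perm.subtypePerm_apply]
    rw [Equiv.Perm.extendDomain_apply_subtype _ _ hp]
    rfl

lemma pfix_finite {A : Set ℕ} (hA : A.Finite) : Finite ↥(pfix A) := by
  have : Finite ↥A := hA
  exact Finite.of_equiv _ (pfixEquiv A).symm

lemma card_pfix {A : Set ℕ} (hA : A.Finite) : Nat.card ↥(pfix A) = Nat.factorial A.ncard := by
  have : Finite ↥A := hA
  rw [Nat.card_congr (pfixEquiv A)]
  have : Nat.card (Equiv.Perm ↥A) = Nat.factorial (Nat.card ↥A) := by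
    haveI : Fintype ↥A := hA.fintype
    rw [Nat.card_eq_fintype_card, Nat.card_eq_fintype_card, Fintype.card_perm]
  rw [this, Nat.card_coe_set_eq]

/-- Adjacent transpositions `(i, i+1)` with `i+1 < m`. -/
def adjSwaps (m : ℕ) : Set (Equiv.Perm ℕ) := {x | ∃ i, i + 1 < m ∧ x = Equiv.swap i (i + 1)}

lemma adjSwaps_mono {m m' : ℕ} (h : m ≤ m') : adjSwaps m ⊆ adjSwaps m' := by
  rintro x ⟨i, hi, rfl⟩
  exact ⟨i, lt_of_lt_of_le hi h, rfl⟩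

lemma swap_mem_closure_adj {m : ℕ} : ∀ b a : ℕ, a < b → b < m →
    Equiv.swap a b ∈ Subgroup.closure (adjSwaps m) := by
  intro b
  induction b using Nat.strong_induction_on with
  | _ b ih =>
    intro a hab hbm
    rcases eq_or_lt_of_le (Nat.succ_le_of_lt hab) with h | h
    · refine Subgroup.subset_closure ⟨a, ?_, ?_⟩
      · omega
      · rw [show b = a + 1 by omega]
    · -- a + 1 < b, use c = b - 1
      obtain ⟨c, rfl⟩ : ∃ c, b = c + 1 := ⟨b - 1, by omega⟩
      have hac : a < c := by omega
      have hswapc : Equiv.swap a c ∈ Subgroup.closure (adjSwaps m) :=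
        ih c (by omega) a hac (by omega)
      have hgen : Equiv.swap c (c + 1) ∈ Subgroup.closure (adjSwaps m) :=
        Subgroup.subset_closure ⟨c, by omega, rfl⟩
      have key : Equiv.swap a (c + 1) =
          Equiv.swap c (c + 1) * Equiv.swap a c * (Equiv.swap c (c + 1))⁻¹ := by
        rw [Equiv.swap_inv]
        have := Equiv.swap_apply_apply (Equiv.swap c (c + 1)) a c
        rw [Equiv.swap_apply_of_ne_of_ne (show a ≠ c by omega) (show a ≠ c + 1 by omega),
          Equiv.swap_apply_left] at this
        rw [this, Equiv.swap_inv]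
      rw [key]
      exact mul_mem (mul_mem hgen hswapc) (inv_mem hgen)

lemma pfix_le_closure_adj : ∀ n : ℕ, pfix (Set.Iio n) ≤ Subgroup.closure (adjSwaps n) := by
  intro n
  induction n with
  | zero =>
    intro σ hσ
    have : σ = 1 := by
      ext p
      exact hσ p (by simp)
    rw [this]; exact one_mem _
  | succ n ih =>
    intro σ hσ
    by_cases h : σ n = n
    · have hσ' : σ ∈ pfix (Set.Iio n) := by
        intro p hp
        simp only [Set.mem_Iio, not_lt] at hp
        rcases eq_or_lt_of_le hp with h' | h'
        · rw [← h']; exact h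
        · exact hσ p (by simp; omega)
      exact Subgroup.closure_mono (adjSwaps_mono (Nat.le_succ n)) (ih hσ')
    · set a := σ n with ha
      have han : a ≠ n := h
      have halt : a < n := by
        rcases lt_or_ge a (n+1) with h' | h'
        · omega
        · exfalso
          have : σ a = a := hσ a (by simp; omega)
          exact han (σ.injective (this.trans ha))
      have hσ' : Equiv.swap a n * σ ∈ pfix (Set.Iio n) := by
        intro p hp
        simp only [Set.mem_Iio, not_lt] at hp
        rcases eq_or_lt_of_le hp with h' | h'
        · simp only [Equiv.Perm.mul_apply, ← h', ← ha, Equiv.swap_apply_left]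
        · have h1 : σ p = p := hσ p (by simp; omega)
          simp only [Equiv.Perm.mul_apply, h1]
          exact Equiv.swap_apply_of_ne_of_ne (by omega) (by omega)
      have h1 : Equiv.swap a n * σ ∈ Subgroup.closure (adjSwaps (n+1)) :=
        Subgroup.closure_mono (adjSwaps_mono (Nat.le_succ n)) (ih hσ')
      have h2 : Equiv.swap a n ∈ Subgroup.closure (adjSwaps (n+1)) :=
        swap_mem_closure_adj n a halt (by omega)
      have : σ = Equiv.swap a n * (Equiv.swap a n * σ) := by
        rw [← mul_assoc, Equiv.swap_mul_self, one_mul]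
      rw [this]
      exact mul_mem h2 h1

lemma closure_adj_le_pfix (n : ℕ) : Subgroup.closure (adjSwaps n) ≤ pfix (Set.Iio n) := by
  rw [Subgroup.closure_le]
  rintro x ⟨i, hi, rfl⟩
  intro p hp
  simp only [Set.mem_Iio, not_lt] at hp
  exact Equiv.swap_apply_of_ne_of_ne (by omega) (by omega)

/-- Extension lemma: an injective map on a finite subset of `[0, m)` with values in `[0, m)`
extends to a permutation fixing `[m, ∞)`. -/
lemma exists_perm_extend (m : ℕ) (A : Finset ℕ) (f : ℕ → ℕ) :
    (∀ a ∈ A, a < m) → Set.InjOn f A → (∀ a ∈ A, f a < m) →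
    ∃ σ : Equiv.Perm ℕ, σ ∈ pfix (Set.Iio m) ∧ ∀ a ∈ A, σ a = f a := by
  classical
  induction A using Finset.induction_on with
  | empty => exact fun _ _ _ => ⟨1, one_mem _, by simp⟩
  | @insert a A ha ih =>
    intro hAm hinj hfm
    obtain ⟨σ', hσ', hagree⟩ := ih (fun x hx => hAm x (Finset.mem_insert_of_mem hx))
      (hinj.mono (by intro x hx; simp only [Finset.coe_insert, Set.mem_insert_iff, Finset.mem_coe]; right; exact hx))
      (fun x hx => hfm x (Finset.mem_insert_of_mem hx))
    set c := σ' a with hc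
    refine ⟨Equiv.swap c (f a) * σ', mul_mem ?_ hσ', ?_⟩
    · intro p hp
      simp only [Set.mem_Iio, not_lt] at hp
      have hcm : c < m := by
        by_contra hcge
        have : σ' c = c := hσ' c (by simp; omega)
        have : a = c := σ'.injective (hc ▸ this).symm
        have := hAm a (Finset.mem_insert_self a A)
        omega
      have hfam : f a < m := hfm a (Finset.mem_insert_self a A)
      exact Equiv.swap_apply_of_ne_of_ne (by omega) (by omega)
    · intro x hx
      rcases Finset.mem_insert.mp hx with rfl | hxA
      · simp only [Equiv.Perm.mul_apply, ← hc, Equiv.swap_apply_left]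
      · have h1 : σ' x = f x := hagree x hxA
        simp only [Equiv.Perm.mul_apply, h1]
        apply Equiv.swap_apply_of_ne_of_ne
        · intro hcontra
          have : σ' x = σ' a := by rw [h1, hcontra]
          exact ha ((σ'.injective this) ▸ hxA)
        · intro hcontra
          have hxa : x ≠ a := fun h => ha (h ▸ hxA)
          exact hxa (hinj (by simp [hxA]) (by simp) hcontra)

/-- Any finite subset of `ℕ` of cardinality `N` can be mapped onto `[0, N)` by a
permutation fixing all large points. -/
lemma exists_perm_image (A : Finset ℕ) (N : ℕ) (hcard : A.card = N) :
    ∃ (m : ℕ) (σ : Equiv.Perm ℕ), σ ∈ pfix (Set.Iio m) ∧ σ '' ↑A = Set.Iio N := by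
  classical
  set m := max ((A.sup id) + 1) N with hm
  have hAm : ∀ a ∈ A, a < m := by
    intro a haA
    have := Finset.le_sup (f := id) haA
    simp only [id] at this
    omega
  have e := A.orderIsoOfFin hcard
  set f : ℕ → ℕ := fun a => if h : a ∈ A then (e.symm ⟨a, h⟩ : Fin N) else 0 with hf
  have hinj : Set.InjOn f ↑A := by
    intro x hx y hy hxy
    simp only [Finset.mem_coe] at hx hy
    simp only [hf, dif_pos hx, dif_pos hy] at hxy
    have h1 : e.symm ⟨x, hx⟩ = e.symm ⟨y, hy⟩ := Fin.ext hxy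
    have h2 := e.symm.injective h1
    exact congrArg Subtype.val h2
  have hfm : ∀ a ∈ A, f a < m := by
    intro a haA
    simp only [hf, dif_pos haA]
    have : ((e.symm ⟨a, haA⟩ : Fin N) : ℕ) < N := (e.symm ⟨a, haA⟩).2
    omega
  obtain ⟨σ, hσ, hagree⟩ := exists_perm_extend m A f hAm hinj hfm
  refine ⟨m, σ, hσ, ?_⟩
  apply Set.eq_of_subset_of_subset
  · rintro _ ⟨x, hx, rfl⟩
    simp only [Finset.mem_coe] at hx
    rw [hagree x hx]
    simp only [hf, dif_pos hx, Set.mem_Iio]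
    exact (e.symm ⟨x, hx⟩).2
  · intro j hj
    simp only [Set.mem_Iio] at hj
    refine ⟨(e ⟨j, hj⟩ : ℕ), (e ⟨j, hj⟩).2, ?_⟩
    rw [hagree _ (e ⟨j, hj⟩).2]
    simp only [hf, dif_pos (e ⟨j, hj⟩).2]
    show ((e.symm (e ⟨j, hj⟩) : Fin N) : ℕ) = j
    rw [OrderIso.symm_apply_apply]

lemma perm_apply_inv_self {α : Type*} (σ : Equiv.Perm α) (q : α) : σ (σ⁻¹ q) = q :=
  σ.apply_symm_apply q

lemma perm_inv_apply_self {α : Type*} (σ : Equiv.Perm α) (q : α) : σ⁻¹ (σ q) = q :=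
  σ.symm_apply_apply q

/-- Transport of conjugation: if `σ` and `τ` agree on `U ⊇ supp π`, conjugates agree. -/
lemma conj_eq_of_eqOn {σ τ π : Equiv.Perm ℕ} {U : Set ℕ}
    (hsupp : {p | π p ≠ p} ⊆ U) (hagree : ∀ p ∈ U, σ p = τ p) :
    σ * π * σ⁻¹ = τ * π * τ⁻¹ := by
  have hmaps : ∀ p ∈ U, π p ∈ U := by
    intro p hp
    by_cases h : π p = p
    · rw [h]; exact hp
    · apply hsupp
      intro hcontra
      exact h (π.injective hcontra)
  ext q
  simp only [Equiv.Perm.mul_apply]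
  by_cases hp : σ⁻¹ q ∈ U
  · have e1 : τ (σ⁻¹ q) = q := by rw [← hagree _ hp, perm_apply_inv_self]
    have hqτ : τ⁻¹ q = σ⁻¹ q := by
      apply τ.injective
      rw [perm_apply_inv_self, e1]
    rw [hqτ, hagree _ (hmaps _ hp)]
  · have h1 : π (σ⁻¹ q) = σ⁻¹ q := by
      by_contra hc
      exact hp (hsupp hc)
    rw [h1, perm_apply_inv_self]
    have hp' : τ⁻¹ q ∉ U := by
      intro hc
      apply hp
      have e2 : σ (τ⁻¹ q) = q := by rw [hagree _ hc, perm_apply_inv_self]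
      have e3 : σ⁻¹ q = τ⁻¹ q := by
        apply σ.injective
        rw [perm_apply_inv_self, e2]
      rw [e3]; exact hc
    have h2 : π (τ⁻¹ q) = τ⁻¹ q := by
      by_contra hc
      exact hp' (hsupp hc)
    rw [h2, perm_apply_inv_self]

/-- Permutations with disjoint supports commute. -/
lemma commute_of_disjoint_supp {β π : Equiv.Perm ℕ} {U : Set ℕ}
    (hsupp : {p | π p ≠ p} ⊆ U) (hβ : ∀ p ∈ U, β p = p) :
    Commute β π := by
  have hmaps : ∀ p ∈ U, π p ∈ U := by
    intro p hp
    by_cases h : π p = p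
    · rw [h]; exact hp
    · apply hsupp
      intro hcontra
      exact h (π.injective hcontra)
  ext p
  simp only [Equiv.Perm.coe_mul, Function.comp_apply]
  by_cases hp : p ∈ U
  · rw [hβ p hp, hβ _ (hmaps p hp)]
  · have h1 : π p = p := by
      by_contra hc; exact hp (hsupp hc)
    rw [h1]
    by_cases h2 : β p = p
    · rw [h2, h1]
    ·
      have : π (β p) = β p := by
        by_contra hc
        have hβp : β p ∈ U := hsupp hc
        have : β (β p) = β p := hβ _ hβp
        exact h2 (β.injective this)
      rw [this]

lemma supp_conj (σ π : Equiv.Perm ℕ) :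
    {p | (σ * π * σ⁻¹) p ≠ p} = σ '' {p | π p ≠ p} := by
  ext q
  simp only [Set.mem_setOf_eq, Equiv.Perm.mul_apply, Set.mem_image]
  constructor
  · intro h
    refine ⟨σ⁻¹ q, ?_, perm_apply_inv_self σ q⟩
    intro hc
    apply h
    rw [hc, perm_apply_inv_self]
  · rintro ⟨p, hp, rfl⟩
    rw [perm_inv_apply_self]
    exact fun hc => hp (σ.injective hc)

end SpinAux



namespace SpinAux
open Equiv Set

-- ============ presented group basics ============

lemma rel_one {r : FreeGroup SpinGenInf} (h : r ∈ spinRelInf) :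
    PresentedGroup.mk spinRelInf r = 1 :=
  (QuotientGroup.eq_one_iff r).mpr (Subgroup.subset_normalClosure h)

lemma zi_sq : zi * zi = 1 := by
  have h : PresentedGroup.mk spinRelInf (ZfI ^ 2) = 1 := rel_one (Or.inl rfl)
  rw [map_pow] at h
  rw [← pow_two]
  exact h

lemma zi_inv : zi⁻¹ = zi := inv_eq_of_mul_eq_one_right zi_sq

lemma zi_comm_tgi (i : ℕ) : zi * tgi i = tgi i * zi := by
  have h : PresentedGroup.mk spinRelInf (ZfI * TfI i * ZfI⁻¹ * (TfI i)⁻¹) = 1 :=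
    rel_one (Or.inr (Or.inl ⟨i, rfl⟩))
  simp only [map_mul, map_inv] at h
  rw [mul_inv_eq_one, mul_inv_eq_iff_eq_mul] at h
  exact h

lemma zi_central (g : SpinCoverInf) : zi * g = g * zi := by
  have hg : g ∈ Subgroup.centralizer {zi} := by
    apply PresentedGroup.generated_by
    intro j
    rw [Subgroup.mem_centralizer_iff]
    intro h hh
    rw [Set.mem_singleton_iff] at hh
    subst hh
    match j with
    | Sum.inl i => exact zi_comm_tgi i
    | Sum.inr () => rfl
  rw [Subgroup.mem_centralizer_iff] at hg
  exact hg zi rfl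

lemma central_pair {c : SpinCoverInf} (hc : c = 1 ∨ c = zi) :
    (∀ g, c * g = g * c) ∧ c * c = 1 := by
  rcases hc with rfl | rfl
  · exact ⟨fun g => by rw [one_mul, mul_one], one_mul 1⟩
  · exact ⟨zi_central, zi_sq⟩

section Theta

variable (θ : SpinCoverInf →* Equiv.Perm ℕ)
  (hθ : ∀ i : ℕ, θ (tgi i) = Equiv.swap i (i + 1))
  (hker : ∀ x, θ x = 1 ↔ x = 1 ∨ x = zi)

include hker in
lemma theta_zi : θ zi = 1 := (hker zi).mpr (Or.inr rfl)

include hker in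
/-- Conjugation depends only on the image under `θ`. -/
lemma conj_eq_of_theta_eq {w w' : SpinCoverInf} (h : θ w = θ w') (x : SpinCoverInf) :
    w * x * w⁻¹ = w' * x * w'⁻¹ := by
  set c := w'⁻¹ * w with hcdef
  have hθc : θ c = 1 := by
    rw [hcdef, map_mul, map_inv, h, inv_mul_cancel]
  have hc : c = 1 ∨ c = zi := (hker c).mp hθc
  obtain ⟨hcen, hcc⟩ := central_pair hc
  have hw : w = w' * c := by rw [hcdef, mul_inv_cancel_left]
  have hcinv : c⁻¹ = c := by
    rcases hc with h1 | h1
    · rw [h1]; exact inv_one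
    · rw [h1]; exact zi_inv
  rw [hw, mul_inv_rev, hcinv]
  calc w' * c * x * (c * w'⁻¹) = w' * (c * x * c) * w'⁻¹ := by group
    _ = w' * (x * (c * c)) * w'⁻¹ := by rw [hcen x]; group
    _ = w' * x * w'⁻¹ := by rw [hcc, mul_one]

/-- Permutations with finite support. -/
def permFinite : Subgroup (Equiv.Perm ℕ) where
  carrier := {σ | {p | σ p ≠ p}.Finite}
  one_mem' := by
    show {p | (1 : Equiv.Perm ℕ) p ≠ p}.Finite
    convert Set.finite_empty
    ext p; simp
  mul_mem' := by
    intro σ τ hσ hτ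
    apply Set.Finite.subset (hσ.union hτ)
    intro p hp
    simp only [Set.mem_setOf_eq, Equiv.Perm.mul_apply] at hp
    by_cases h : τ p = p
    · left; rw [h] at hp; exact hp
    · right; exact h
  inv_mem' := by
    intro σ hσ
    apply Set.Finite.subset hσ
    intro p hp
    simp only [Set.mem_setOf_eq] at hp ⊢
    intro hc
    apply hp
    exact Equiv.Perm.inv_eq_iff_eq.mpr hc.symm

include hθ hker in
lemma theta_supp_finite (g : SpinCoverInf) : {p | θ g p ≠ p}.Finite := by
  have hg : g ∈ Subgroup.comap θ permFinite := by
    apply PresentedGroup.generated_by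
    intro j
    match j with
    | Sum.inl i =>
      show θ (tgi i) ∈ permFinite
      rw [hθ i]
      apply Set.Finite.subset ((Set.finite_singleton (i+1)).insert i)
      intro p hp
      simp only [Set.mem_setOf_eq] at hp
      simp only [Set.mem_insert_iff, Set.mem_singleton_iff]
      by_contra hc
      push_neg at hc
      exact hp (Equiv.swap_apply_of_ne_of_ne hc.1 hc.2)
    | Sum.inr () =>
      show θ zi ∈ permFinite
      rw [theta_zi θ hker]
      exact one_mem _
  exact hg

include hθ hker in
lemma exists_lift {n : ℕ} {σ : Equiv.Perm ℕ} (hσ : σ ∈ pfix (Set.Iio n)) :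
    ∃ w ∈ SpinSub n, θ w = σ := by
  have hσ' : σ ∈ Subgroup.closure (adjSwaps n) := pfix_le_closure_adj n hσ
  clear hσ
  induction hσ' using Subgroup.closure_induction with
  | mem x hx =>
    obtain ⟨i, hi, rfl⟩ := hx
    exact ⟨tgi i, Subgroup.subset_closure (Or.inr ⟨i, hi, rfl⟩), hθ i⟩
  | one => exact ⟨1, one_mem _, map_one θ⟩
  | mul x y hx hy ihx ihy =>
    obtain ⟨w₁, hw₁, hw₁'⟩ := ihx
    obtain ⟨w₂, hw₂, hw₂'⟩ := ihy
    exact ⟨w₁ * w₂, mul_mem hw₁ hw₂, by rw [map_mul, hw₁', hw₂']⟩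
  | inv x hx ihx =>
    obtain ⟨w, hw, hw'⟩ := ihx
    exact ⟨w⁻¹, inv_mem hw, by rw [map_inv, hw']⟩

include hθ hker in
lemma mem_spinSub_iff {n : ℕ} {g : SpinCoverInf} :
    g ∈ SpinSub n ↔ θ g ∈ pfix (Set.Iio n) := by
  constructor
  · intro hg
    have hle : SpinSub n ≤ Subgroup.comap θ (pfix (Set.Iio n)) := by
      rw [SpinSub, Subgroup.closure_le]
      rintro x (rfl | ⟨i, hi, rfl⟩)
      · show θ zi ∈ pfix (Set.Iio n)
        rw [theta_zi θ hker]
        exact one_mem _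
      · show θ (tgi i) ∈ pfix (Set.Iio n)
        rw [hθ i]
        intro p hp
        simp only [Set.mem_Iio, not_lt] at hp
        exact Equiv.swap_apply_of_ne_of_ne (by omega) (by omega)
    exact hle hg
  · intro hg
    obtain ⟨w, hw, hw'⟩ := exists_lift θ hθ hker hg
    have h1 : θ (w⁻¹ * g) = 1 := by rw [map_mul, map_inv, hw', inv_mul_cancel]
    rcases (hker _).mp h1 with h | h
    · have : g = w := by
        have := congrArg (w * ·) h
        simpa [mul_assoc] using this
      rw [this]; exact hw
    · have hzi : zi ∈ SpinSub n := Subgroup.subset_closure (Or.inl rfl)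
      have : g = w * zi := by
        have := congrArg (w * ·) h
        simpa [mul_assoc] using this
      rw [this]; exact mul_mem hw hzi

include hker in
/-- The sign lemma: conjugation by a lift of a permutation commuting with `θ x`
fixes `x`, provided `θ x` has odd order. -/
lemma conj_fix (x v : SpinCoverInf) (hcomm : θ v * θ x = θ x * θ v)
    {L : ℕ} (hL : Odd L) (hLx : (θ x) ^ L = 1) : v * x * v⁻¹ = x := by
  obtain ⟨m, hm⟩ := hL
  set y := x ^ (m + 1) with hy
  have hθy : θ y = (θ x) ^ (m + 1) := by rw [hy, map_pow]
  have hyy : θ (y * y * x⁻¹) = 1 := by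
    rw [map_mul, map_mul, map_inv, hθy]
    rw [← pow_add]
    have : m + 1 + (m + 1) = L + 1 := by omega
    rw [this, pow_succ, hLx, one_mul, mul_inv_cancel]
  have hvy : θ (v * y * v⁻¹ * y⁻¹) = 1 := by
    have hcy : θ v * θ y = θ y * θ v := by
      rw [hθy]
      exact (Commute.pow_right hcomm (m + 1)).eq
    simp only [map_mul, map_inv]
    rw [hcy]
    group
  set e := y * y * x⁻¹ with he
  set c := v * y * v⁻¹ * y⁻¹ with hc
  obtain ⟨hecen, hee⟩ := central_pair ((hker e).mp hyy)
  obtain ⟨hccen, hcc⟩ := central_pair ((hker c).mp hvy)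
  have hx : x = e⁻¹ * (y * y) := by rw [he]; group
  have hvyy : v * y * v⁻¹ = c * y := by rw [hc]; group
  have heinv : ∀ g, e⁻¹ * g = g * e⁻¹ := by
    intro g
    rw [eq_comm, mul_inv_eq_iff_eq_mul, mul_assoc, ← hecen g, ← mul_assoc, inv_mul_cancel, one_mul]
  calc v * x * v⁻¹ = v * (e⁻¹ * (y * y)) * v⁻¹ := by rw [← hx]
    _ = e⁻¹ * ((v * y * v⁻¹) * (v * y * v⁻¹)) := by
        rw [← mul_assoc, ← heinv v]
        group
    _ = e⁻¹ * (c * (y * c) * y) := by rw [hvyy]; group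
    _ = e⁻¹ * ((c * c) * (y * y)) := by rw [← hccen y]; group
    _ = e⁻¹ * (y * y) := by rw [hcc, one_mul]
    _ = x := hx.symm

-- ============ odd order from EvenSplit ============

lemma ncard_Iio (d : ℕ) : (Set.Iio d).ncard = d := by
  have : Set.Iio d = ↑(Finset.range d) := by
    ext p; simp [Finset.mem_range]
  rw [this, Set.ncard_coe_finset, Finset.card_range]

lemma cycle_ncard_eq_minimalPeriod (π : Equiv.Perm ℕ) (x : ℕ)
    (hfin : {y | π.SameCycle x y}.Finite) :
    0 < Function.minimalPeriod π x ∧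
      {y | π.SameCycle x y}.ncard = Function.minimalPeriod π x := by
  classical
  -- the natural powers of π applied to x lie in the cycle
  have hmem : ∀ k : ℕ, (π ^ k) x ∈ {y | π.SameCycle x y} := by
    intro k
    exact ⟨(k : ℤ), by rw [zpow_natCast]⟩
  -- x is a periodic point
  have hper : x ∈ Function.periodicPts π := by
    have : ¬ Function.Injective (fun k : ℕ => ((π ^ k) x : ℕ)) := by
      intro hinj
      have : Set.range (fun k : ℕ => (π ^ k) x) ⊆ {y | π.SameCycle x y} := by
        rintro _ ⟨k, rfl⟩; exact hmem k
      exact Set.infinite_range_of_injective hinj (hfin.subset this)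
    rw [Function.not_injective_iff] at this
    obtain ⟨i, j, hij, hne⟩ := this
    rcases hne.lt_or_gt with h | h
    · refine ⟨j - i, by omega, ?_⟩
      show π^[j-i] x = x
      rw [Equiv.Perm.iterate_eq_pow]
      have : (π ^ i) ((π ^ (j - i)) x) = (π ^ i) x := by
        rw [← Equiv.Perm.mul_apply, ← pow_add]
        rw [show i + (j - i) = j by omega]
        exact hij.symm
      exact (π ^ i).injective this
    · refine ⟨i - j, by omega, ?_⟩
      show π^[i-j] x = x
      rw [Equiv.Perm.iterate_eq_pow]
      have : (π ^ j) ((π ^ (i - j)) x) = (π ^ j) x := by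
        rw [← Equiv.Perm.mul_apply, ← pow_add]
        rw [show j + (i - j) = i by omega]
        exact hij
      exact (π ^ j).injective this
  set d := Function.minimalPeriod π x with hd
  have hdpos : 0 < d := Function.minimalPeriod_pos_of_mem_periodicPts hper
  have hdfix : (π ^ d) x = x := by
    have := Function.isPeriodicPt_minimalPeriod π x
    rwa [Function.IsPeriodicPt, Function.IsFixedPt, Equiv.Perm.iterate_eq_pow] at this
  refine ⟨hdpos, ?_⟩
  have hset : {y | π.SameCycle x y} = (fun k : ℕ => (π ^ k) x) '' (Set.Iio d) := by
    apply Set.eq_of_subset_of_subset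
    · rintro y ⟨i, rfl⟩
      have hzfix : ∀ q : ℤ, ((π ^ (d : ℤ)) ^ q) x = x := by
        intro q
        apply Equiv.Perm.zpow_apply_eq_self_of_apply_eq_self
        rw [zpow_natCast]
        exact hdfix
      have hred : (π ^ i) x = (π ^ ((i.emod d).toNat)) x := by
        have h1 : i = d * (i.ediv d) + i.emod d := (Int.mul_ediv_add_emod i d).symm
        have h2 : (π ^ i) x = (π ^ ((d:ℤ) * (i.ediv d))) ((π ^ (i.emod d)) x) := by
          rw [← Equiv.Perm.mul_apply, ← zpow_add, ← h1]
        have h3 : (0:ℤ) ≤ i.emod d := Int.emod_nonneg i (by exact_mod_cast hdpos.ne')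
        have h4 : (π ^ (i.emod d)) x = (π ^ ((i.emod d).toNat)) x := by
          rw [← zpow_natCast, Int.toNat_of_nonneg h3]
        have h6 : (π ^ ((d:ℤ) * (i.ediv d))) ((π ^ (i.emod d)) x)
            = (π ^ (i.emod d)) ((π ^ ((d:ℤ) * (i.ediv d))) x) := by
          rw [← Equiv.Perm.mul_apply, ← Equiv.Perm.mul_apply]
          congr 1
          rw [← zpow_add, ← zpow_add, add_comm]
        have h7 : (π ^ ((d:ℤ) * (i.ediv d))) x = x := by
          rw [zpow_mul]
          exact hzfix _
        calc (π ^ i) x = (π ^ ((d:ℤ) * (i.ediv d))) ((π ^ (i.emod d)) x) := h2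
          _ = (π ^ (i.emod d)) ((π ^ ((d:ℤ) * (i.ediv d))) x) := h6
          _ = (π ^ (i.emod d)) x := by rw [h7]
          _ = (π ^ ((i.emod d).toNat)) x := h4
      rw [hred]
      refine ⟨(i.emod d).toNat, ?_, rfl⟩
      simp only [Set.mem_Iio]
      have h3 : i.emod d < d := Int.emod_lt_of_pos i (by exact_mod_cast hdpos)
      omega
    · rintro _ ⟨k, _, rfl⟩
      exact hmem k
  rw [hset]
  have hinj : Set.InjOn (fun k : ℕ => (π ^ k) x) (Set.Iio d) := by
    intro i hi j hj hij
    have := Function.iterate_injOn_Iio_minimalPeriod (f := ⇑π) (x := x)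
    apply this
    · exact hi
    · exact hj
    · simp only [Equiv.Perm.iterate_eq_pow]
      exact hij
  rw [Set.ncard_image_of_injOn hinj, ncard_Iio]

include hθ hker in
lemma oddOrder_of_evenSplit {a : SpinCoverInf} (ha : EvenSplit θ a) :
    ∃ L : ℕ, Odd L ∧ (θ a) ^ L = 1 := by
  classical
  set π := θ a with hπ
  have hS : {p | π p ≠ p}.Finite := theta_supp_finite θ hθ hker a
  -- for each moved point, the minimal period is odd and positive
  have key : ∀ p ∈ hS.toFinset, Odd (Function.minimalPeriod π p) ∧
      (π ^ (Function.minimalPeriod π p)) p = p := by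
    intro p hp
    rw [Set.Finite.mem_toFinset] at hp
    have hodd := ha p hp
    have hfin : {y | π.SameCycle p y}.Finite := by
      by_contra hc
      rw [Set.Infinite.ncard hc] at hodd
      simp [Nat.odd_iff] at hodd
    obtain ⟨hdpos, hdcard⟩ := cycle_ncard_eq_minimalPeriod π p hfin
    constructor
    · rw [← hdcard]; exact hodd
    · have := Function.isPeriodicPt_minimalPeriod π p
      rwa [Function.IsPeriodicPt, Function.IsFixedPt, Equiv.Perm.iterate_eq_pow] at this
  set L := ∏ p ∈ hS.toFinset, Function.minimalPeriod π p with hL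
  refine ⟨L, ?_, ?_⟩
  · rw [hL]
    apply Finset.prod_induction _ Odd (fun a b => Odd.mul) odd_one
    intro p hp
    exact (key p hp).1
  · ext p
    simp only [Equiv.Perm.one_apply]
    by_cases hp : p ∈ hS.toFinset
    · obtain ⟨_, hfix⟩ := key p hp
      have hdvd : Function.minimalPeriod π p ∣ L := Finset.dvd_prod_of_mem _ hp
      obtain ⟨t, ht⟩ := hdvd
      rw [ht, pow_mul]
      exact Equiv.Perm.pow_apply_eq_self_of_apply_eq_self hfix t
    · rw [Set.Finite.mem_toFinset] at hp
      simp only [Set.mem_setOf_eq, not_not] at hp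
      exact Equiv.Perm.pow_apply_eq_self_of_apply_eq_self hp L

end Theta
end SpinAux



namespace SpinAux
open Equiv Set

/-- A choice of lift along `θ`. -/
noncomputable def lft (θ : SpinCoverInf →* Equiv.Perm ℕ) (σ : Equiv.Perm ℕ) : SpinCoverInf :=
  @dite _ (∃ w, θ w = σ) (Classical.dec _) (fun h => h.choose) (fun _ => 1)

lemma lft_spec (θ : SpinCoverInf →* Equiv.Perm ℕ) {σ : Equiv.Perm ℕ} (h : ∃ w, θ w = σ) :
    θ (lft θ σ) = σ := by
  rw [lft, dif_pos h]
  exact h.choose_spec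

/-- Restriction of a permutation preserving `[0,N)` to one supported in `[0,N)`. -/
noncomputable def restr (σ : Equiv.Perm ℕ) (N : ℕ) (h : ∀ p, p < N ↔ σ p < N) :
    Equiv.Perm ℕ :=
  (σ.subtypePerm (p := fun x => x < N) (fun x => (h x).symm)).extendDomain (Equiv.refl _)

lemma restr_lt {σ : Equiv.Perm ℕ} {N : ℕ} {h : ∀ p, p < N ↔ σ p < N} {p : ℕ} (hp : p < N) :
    restr σ N h p = σ p := by
  rw [restr]
  exact Equiv.Perm.extendDomain_apply_subtype (p := fun x => x < N) _ _ hp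

lemma restr_ge {σ : Equiv.Perm ℕ} {N : ℕ} {h : ∀ p, p < N ↔ σ p < N} {p : ℕ} (hp : ¬ p < N) :
    restr σ N h p = p :=
  Equiv.Perm.extendDomain_apply_not_subtype _ _ hp

end SpinAux


open SpinAux Equiv Set in
/-- Let `𝒞` be an orbit of the simultaneous conjugation action of `S̃_∞` on `r`-tuples
of even split elements, and let `N` be the number of points moved by a tuple in `𝒞`.
Then (i) `𝒞 ∩ (S̃_n)^r = ∅` for `n < N`; (ii) for `n ≥ N` it is a single orbit of the
simultaneous conjugation action of `S̃_n`; and (iii) there is a constant `k(𝒞) > 0`,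
independent of `n`, with `|𝒞 ∩ (S̃_n)^r| = n(n-1)⋯(n-N+1)/k(𝒞)` for all `n ≥ N`. -/
theorem tuple_class_intersection (θ : SpinCoverInf →* Equiv.Perm ℕ)
    (hθ : ∀ i : ℕ, θ (tgi i) = Equiv.swap i (i + 1))
    (hker : ∀ x, θ x = 1 ↔ x = 1 ∨ x = zi)
    (r : ℕ) (hr : 1 ≤ r) (C : Set (Fin r → SpinCoverInf))
    (x₀ : Fin r → SpinCoverInf) (hx₀ : ∀ i, EvenSplit θ (x₀ i))
    (hC : C = {y | ∃ w : SpinCoverInf, ∀ i, y i = w * x₀ i * w⁻¹})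
    (N : ℕ) (hN : N = Set.ncard (⋃ i : Fin r, {p : ℕ | θ (x₀ i) p ≠ p})) :
    (∀ n : ℕ, n < N → {y ∈ C | ∀ i, y i ∈ SpinSub n} = ∅) ∧
    (∀ n : ℕ, N ≤ n → ∃ y₀ : Fin r → SpinCoverInf,
      y₀ ∈ C ∧ (∀ i, y₀ i ∈ SpinSub n) ∧
      {y ∈ C | ∀ i, y i ∈ SpinSub n} =
        {y | ∃ w ∈ SpinSub n, ∀ i, y i = w * y₀ i * w⁻¹}) ∧
    (∃ k : ℚ, 0 < k ∧ ∀ n : ℕ, N ≤ n →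
      (Set.ncard {y ∈ C | ∀ i, y i ∈ SpinSub n} : ℚ) =
        (Nat.descFactorial n N : ℚ) / k) := by
  classical
  set U₀ : Set ℕ := ⋃ i : Fin r, {p : ℕ | θ (x₀ i) p ≠ p} with hU₀
  have hU₀fin : U₀.Finite :=
    Set.finite_iUnion (fun i => theta_supp_finite θ hθ hker (x₀ i))
  -- supports of conjugates
  have hsuppconj : ∀ (w : SpinCoverInf) (x : SpinCoverInf),
      {p | θ (w * x * w⁻¹) p ≠ p} = (θ w) '' {p | θ x p ≠ p} := by
    intro w x
    rw [map_mul, map_mul, map_inv]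
    exact supp_conj (θ w) (θ x)
  -- Part (i)
  have part1 : ∀ n : ℕ, n < N → {y ∈ C | ∀ i, y i ∈ SpinSub n} = ∅ := by
    intro n hn
    rw [Set.eq_empty_iff_forall_notMem]
    rintro y ⟨hyC, hymem⟩
    rw [hC] at hyC
    obtain ⟨w, hw⟩ := hyC
    have hUn : (⋃ i : Fin r, {p : ℕ | θ (y i) p ≠ p}) ⊆ Set.Iio n := by
      intro p hp
      rw [Set.mem_iUnion] at hp
      obtain ⟨i, hpi⟩ := hp
      have := (mem_spinSub_iff θ hθ hker).mp (hymem i)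
      by_contra hc
      exact hpi (this p (by simpa using hc))
    have hUcard : (⋃ i : Fin r, {p : ℕ | θ (y i) p ≠ p}).ncard = N := by
      have : (⋃ i : Fin r, {p : ℕ | θ (y i) p ≠ p}) = (θ w) '' U₀ := by
        rw [hU₀, Set.image_iUnion]
        exact Set.iUnion_congr (fun i => by rw [hw i, hsuppconj])
      rw [this, Set.ncard_image_of_injective _ (θ w).injective, hN]
    have hle : N ≤ n := by
      rw [← hUcard]
      have := Set.ncard_le_ncard hUn (Set.finite_Iio n)
      rwa [ncard_Iio] at this
    omega
  -- choose a base tuple y₀ with support exactly [0, N)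
  obtain ⟨m, σ₀, hσ₀fix, hσ₀img⟩ := exists_perm_image hU₀fin.toFinset N
    (by rw [← Set.ncard_eq_toFinset_card U₀ hU₀fin]; exact hN.symm)
  rw [Set.Finite.coe_toFinset] at hσ₀img
  obtain ⟨w₀, _, hw₀θ⟩ := exists_lift θ hθ hker hσ₀fix
  set y₀ : Fin r → SpinCoverInf := fun i => w₀ * x₀ i * w₀⁻¹ with hy₀
  have hy₀C : y₀ ∈ C := by rw [hC]; exact ⟨w₀, fun i => rfl⟩
  have hy₀supp : ∀ i, {p | θ (y₀ i) p ≠ p} ⊆ Set.Iio N := by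
    intro i
    rw [hy₀, hsuppconj, hw₀θ, ← hσ₀img]
    apply Set.image_mono
    exact Set.subset_iUnion (fun i => {p : ℕ | θ (x₀ i) p ≠ p}) i
  have hy₀union : (⋃ i, {p | θ (y₀ i) p ≠ p}) = Set.Iio N := by
    have : (⋃ i, {p | θ (y₀ i) p ≠ p}) = σ₀ '' U₀ := by
      rw [hU₀, Set.image_iUnion]
      exact Set.iUnion_congr (fun i => by rw [hy₀, hsuppconj, hw₀θ])
    rw [this, hσ₀img]
  have hy₀odd : ∀ i, ∃ L : ℕ, Odd L ∧ (θ (y₀ i)) ^ L = 1 := by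
    intro i
    obtain ⟨L, hL, hLx⟩ := oddOrder_of_evenSplit θ hθ hker (hx₀ i)
    refine ⟨L, hL, ?_⟩
    rw [hy₀]
    show (θ (w₀ * x₀ i * w₀⁻¹)) ^ L = 1
    rw [map_mul, map_mul, map_inv]
    have : (θ w₀ * θ (x₀ i) * (θ w₀)⁻¹) = (MulAut.conj (θ w₀)) (θ (x₀ i)) := rfl
    rw [this, ← map_pow, hLx, map_one]
  have hy₀mem : ∀ n : ℕ, N ≤ n → ∀ i, y₀ i ∈ SpinSub n := by
    intro n hn i
    rw [mem_spinSub_iff θ hθ hker]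
    intro p hp
    simp only [Set.mem_Iio, not_lt] at hp
    by_contra hc
    have : p ∈ Set.Iio N := hy₀supp i hc
    simp only [Set.mem_Iio] at this
    omega
  -- the uniqueness engine
  have uniq : ∀ n : ℕ, N ≤ n → ∀ u : SpinCoverInf,
      (∀ i, θ (u * y₀ i * u⁻¹) ∈ pfix (Set.Iio n)) →
      ∃ w ∈ SpinSub n, ∀ i, w * y₀ i * w⁻¹ = u * y₀ i * u⁻¹ := by
    intro n hn u hu
    have htau : ∀ p < N, θ u p < n := by
      intro p hp
      have hpU : p ∈ ⋃ i, {q | θ (y₀ i) q ≠ q} := by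
        rw [hy₀union]; exact hp
      rw [Set.mem_iUnion] at hpU
      obtain ⟨i, hpi⟩ := hpU
      have himg : θ u p ∈ {q | θ (u * y₀ i * u⁻¹) q ≠ q} := by
        rw [hsuppconj]
        exact ⟨p, hpi, rfl⟩
      by_contra hc
      exact himg (hu i (θ u p) (by simpa using hc))
    obtain ⟨σ, hσfix, hagree⟩ := exists_perm_extend n (Finset.range N) (⇑(θ u))
      (fun a ha => by rw [Finset.mem_range] at ha; omega)
      ((θ u).injective.injOn)
      (fun a ha => by rw [Finset.mem_range] at ha; exact htau a ha)
    obtain ⟨w, hwmem, hwθ⟩ := exists_lift θ hθ hker hσfix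
    refine ⟨w, hwmem, fun i => ?_⟩
    set d := w⁻¹ * u with hd
    have hθd : ∀ p ∈ Set.Iio N, θ d p = p := by
      intro p hp
      simp only [Set.mem_Iio] at hp
      rw [hd, map_mul, map_inv, Equiv.Perm.mul_apply]
      have : σ p = θ u p := hagree p (Finset.mem_range.mpr hp)
      rw [hwθ, ← this, perm_inv_apply_self]
    have hcomm : Commute (θ d) (θ (y₀ i)) :=
      commute_of_disjoint_supp (hy₀supp i) hθd
    obtain ⟨L, hL, hLx⟩ := hy₀odd i
    have hfix : d * y₀ i * d⁻¹ = y₀ i := conj_fix θ hker (y₀ i) d hcomm hL hLx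
    have hu2 : u = w * d := by rw [hd, mul_inv_cancel_left]
    calc w * y₀ i * w⁻¹ = w * (d * y₀ i * d⁻¹) * w⁻¹ := by rw [hfix]
      _ = (w * d) * y₀ i * (w * d)⁻¹ := by group
      _ = u * y₀ i * u⁻¹ := by rw [← hu2]
  -- part (ii) with the fixed y₀
  have part2 : ∀ n : ℕ, N ≤ n →
      {y ∈ C | ∀ i, y i ∈ SpinSub n} =
        {y | ∃ w ∈ SpinSub n, ∀ i, y i = w * y₀ i * w⁻¹} := by
    intro n hn
    apply Set.eq_of_subset_of_subset
    · rintro y ⟨hyC, hymem⟩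
      rw [hC] at hyC
      obtain ⟨v, hv⟩ := hyC
      set u := v * w₀⁻¹ with hudef
      have huy : ∀ i, u * y₀ i * u⁻¹ = y i := by
        intro i
        rw [hv i, hudef, hy₀]
        group
      have hu : ∀ i, θ (u * y₀ i * u⁻¹) ∈ pfix (Set.Iio n) := by
        intro i
        rw [huy i]
        exact (mem_spinSub_iff θ hθ hker).mp (hymem i)
      obtain ⟨w, hwmem, hw⟩ := uniq n hn u hu
      exact ⟨w, hwmem, fun i => by rw [hw i, huy i]⟩
    · rintro y ⟨w, hwmem, hw⟩
      constructor
      · rw [hC]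
        refine ⟨w * w₀, fun i => ?_⟩
        rw [hw i, hy₀]
        group
      · intro i
        rw [hw i]
        exact mul_mem (mul_mem hwmem (hy₀mem n hn i)) (inv_mem hwmem)
  refine ⟨part1, fun n hn => ⟨y₀, hy₀C, hy₀mem n hn, part2 n hn⟩, ?_⟩
  -- Part (iii): counting
  set SA : Set (Equiv.Perm ℕ) :=
    {σ | σ ∈ pfix (Set.Iio N) ∧ ∀ w : SpinCoverInf, θ w = σ → ∀ i, w * y₀ i * w⁻¹ = y₀ i}
    with hSA
  have hSAfin : Finite ↥SA := by
    have h1 : Finite ↥(pfix (Set.Iio N)) := pfix_finite (Set.finite_Iio N)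
    have h2 : ((pfix (Set.Iio N) : Subgroup (Equiv.Perm ℕ)) : Set (Equiv.Perm ℕ)).Finite :=
      Set.finite_coe_iff.mp h1
    rw [Set.finite_coe_iff]
    exact h2.subset (fun σ hσ => hσ.1)
  have hSAne : (1 : Equiv.Perm ℕ) ∈ SA := by
    constructor
    · exact one_mem _
    · intro w hw i
      have : θ w = θ (1 : SpinCoverInf) := by rw [hw, map_one]
      rw [conj_eq_of_theta_eq θ hker this (y₀ i)]
      group
  set k₀ : ℕ := Nat.card ↥SA with hk₀
  have hk₀pos : 0 < k₀ := by
    haveI : Nonempty ↥SA := ⟨⟨1, hSAne⟩⟩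
    exact Nat.card_pos
  refine ⟨(k₀ : ℚ), by exact_mod_cast hk₀pos, ?_⟩
  intro n hn
  -- group action of pfix (Iio n) on tuples
  set G := pfix (Set.Iio n) with hG
  haveI hGfin : Finite ↥G := pfix_finite (Set.finite_Iio n)
  have hlift : ∀ σ : ↥G, ∃ w, θ w = σ.1 := by
    rintro ⟨σ, hσ⟩
    obtain ⟨w, _, hw⟩ := exists_lift θ hθ hker hσ
    exact ⟨w, hw⟩
  letI smulG : SMul ↥G (Fin r → SpinCoverInf) :=
    ⟨fun σ y => fun i => lft θ σ.1 * y i * (lft θ σ.1)⁻¹⟩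
  have smul_def : ∀ (σ : ↥G) (y : Fin r → SpinCoverInf) (i : Fin r),
      (σ • y) i = lft θ σ.1 * y i * (lft θ σ.1)⁻¹ := fun _ _ _ => rfl
  letI actG : MulAction ↥G (Fin r → SpinCoverInf) :=
    { one_smul := by
        intro y
        funext i
        rw [smul_def]
        have h1 : θ (lft θ ((1 : ↥G) : Equiv.Perm ℕ)) = θ (1 : SpinCoverInf) := by
          rw [lft_spec θ (hlift 1), map_one]; rfl
        rw [conj_eq_of_theta_eq θ hker h1 (y i)]
        group
      mul_smul := by
        intro σ τ y
        funext i
        rw [smul_def, smul_def, smul_def]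
        have h1 : θ (lft θ ((σ * τ : ↥G) : Equiv.Perm ℕ)) = θ (lft θ σ.1 * lft θ τ.1) := by
          rw [lft_spec θ (hlift (σ * τ)), map_mul, lft_spec θ (hlift σ), lft_spec θ (hlift τ)]
          rfl
        rw [conj_eq_of_theta_eq θ hker h1 (y i)]
        group }
  -- the set in question is the orbit of y₀
  have horb : {y ∈ C | ∀ i, y i ∈ SpinSub n} = MulAction.orbit ↥G y₀ := by
    rw [part2 n hn]
    apply Set.eq_of_subset_of_subset
    · rintro y ⟨w, hwmem, hw⟩
      have hσ : θ w ∈ G := (mem_spinSub_iff θ hθ hker).mp hwmem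
      rw [MulAction.mem_orbit_iff]
      refine ⟨⟨θ w, hσ⟩, ?_⟩
      funext i
      rw [smul_def]
      have h1 : θ (lft θ (θ w)) = θ w := lft_spec θ ⟨w, rfl⟩
      rw [conj_eq_of_theta_eq θ hker h1 (y₀ i), ← hw i]
    · rintro y hy
      rw [MulAction.mem_orbit_iff] at hy
      obtain ⟨⟨σ, hσ⟩, hσy⟩ := hy
      obtain ⟨w, hwmem, hwθ⟩ := exists_lift θ hθ hker hσ
      refine ⟨w, hwmem, fun i => ?_⟩
      rw [← hσy, smul_def]
      have h1 : θ (lft θ σ) = θ w := by rw [lft_spec θ ⟨w, hwθ⟩, hwθ]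
      rw [conj_eq_of_theta_eq θ hker h1 (y₀ i)]
  -- stabilizer decomposition
  set SB : Set (Equiv.Perm ℕ) := ((pfix (Set.Ico N n) : Subgroup (Equiv.Perm ℕ)) :
    Set (Equiv.Perm ℕ)) with hSB
  have hSBfin : Finite ↥SB := pfix_finite (Set.finite_Ico N n)
  set St := MulAction.stabilizer ↥G y₀ with hSt
  -- membership in stabilizer unfolded
  have hStmem : ∀ (σ : ↥G), σ ∈ St ↔ ∀ i, lft θ σ.1 * y₀ i * (lft θ σ.1)⁻¹ = y₀ i := by
    intro σ
    rw [MulAction.mem_stabilizer_iff]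
    constructor
    · intro h i
      have := congrFun h i
      rwa [smul_def] at this
    · intro h
      funext i
      rw [smul_def, h i]
  -- conjugation by an element of SB fixes each y₀ i
  have hSBconj : ∀ β ∈ SB, ∀ w : SpinCoverInf, θ w = β → ∀ i, w * y₀ i * w⁻¹ = y₀ i := by
    intro β hβ w hw i
    have hβfix : ∀ p ∈ Set.Iio N, β p = p := by
      intro p hp
      simp only [Set.mem_Iio] at hp
      apply hβ
      simp only [Set.mem_Ico, not_and, not_le]
      omega
    have hcomm : Commute (θ w) (θ (y₀ i)) := by
      rw [hw]
      exact commute_of_disjoint_supp (hy₀supp i) hβfix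
    obtain ⟨L, hL, hLx⟩ := hy₀odd i
    exact conj_fix θ hker (y₀ i) w hcomm hL hLx
  -- any lift of a stabilizer element conjugates y₀ trivially
  have hStconj : ∀ σ : ↥G, σ ∈ St → ∀ w : SpinCoverInf, θ w = σ.1 →
      ∀ i, w * y₀ i * w⁻¹ = y₀ i := by
    intro σ hσ w hw i
    have h1 : θ w = θ (lft θ σ.1) := by rw [hw, lft_spec θ (hlift σ)]
    rw [conj_eq_of_theta_eq θ hker h1 (y₀ i)]
    exact (hStmem σ).mp hσ i
  -- the product equivalence SA × SB ≃ St
  have hmul_mem : ∀ (α : ↥SA) (β : ↥SB), α.1 * β.1 ∈ G := by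
    rintro ⟨α, hα⟩ ⟨β, hβ⟩
    show α * β ∈ pfix (Set.Iio n)
    apply mul_mem
    · exact pfix_mono (A := Set.Iio N) (B := Set.Iio n)
        (fun p hp => by simp only [Set.mem_Iio] at hp ⊢; omega) hα.1
    · exact pfix_mono (A := Set.Ico N n) (B := Set.Iio n)
        (fun p hp => by simp only [Set.mem_Ico, Set.mem_Iio] at hp ⊢; omega) hβ
  have hmul_stab : ∀ (α : ↥SA) (β : ↥SB), (⟨α.1 * β.1, hmul_mem α β⟩ : ↥G) ∈ St := by
    rintro ⟨α, hα⟩ ⟨β, hβ⟩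
    rw [hStmem]
    intro i
    obtain ⟨wα, _, hwα⟩ := exists_lift θ hθ hker
      (pfix_mono (A := Set.Iio N) (B := Set.Iio n)
        (fun p hp => by simp only [Set.mem_Iio] at hp ⊢; omega) hα.1)
    obtain ⟨wβ, _, hwβ⟩ := exists_lift θ hθ hker
      (pfix_mono (A := Set.Ico N n) (B := Set.Iio n)
        (fun p hp => by simp only [Set.mem_Ico, Set.mem_Iio] at hp ⊢; omega) hβ)
    have h1 : θ (lft θ (α * β)) = θ (wα * wβ) := by
      rw [lft_spec θ ⟨wα * wβ, by rw [map_mul, hwα, hwβ]⟩, map_mul, hwα, hwβ]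
    rw [conj_eq_of_theta_eq θ hker h1 (y₀ i)]
    have h2 : wβ * y₀ i * wβ⁻¹ = y₀ i := hSBconj β hβ wβ hwβ i
    have h3 : wα * y₀ i * wα⁻¹ = y₀ i := hα.2 wα hwα i
    calc wα * wβ * y₀ i * (wα * wβ)⁻¹ = wα * (wβ * y₀ i * wβ⁻¹) * wα⁻¹ := by group
      _ = wα * y₀ i * wα⁻¹ := by rw [h2]
      _ = y₀ i := h3
  set prodmap : ↥SA × ↥SB → ↥St :=
    fun p => ⟨⟨p.1.1 * p.2.1, hmul_mem p.1 p.2⟩, hmul_stab p.1 p.2⟩ with hprodmap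
  have hinj : Function.Injective prodmap := by
    rintro ⟨⟨α, hα⟩, ⟨β, hβ⟩⟩ ⟨⟨α', hα'⟩, ⟨β', hβ'⟩⟩ heq
    have h1 : α * β = α' * β' := congrArg (fun x : ↥St => (x.1.1 : Equiv.Perm ℕ)) heq
    have hg1 : α'⁻¹ * α ∈ pfix (Set.Iio N) := mul_mem (inv_mem hα'.1) hα.1
    have hg2 : β' * β⁻¹ ∈ pfix (Set.Ico N n) := mul_mem hβ' (inv_mem hβ)
    have heq1 : α'⁻¹ * α = β' * β⁻¹ := by
      have h2 : α = α' * (β' * β⁻¹) := by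
        rw [← mul_assoc, ← h1, mul_assoc, mul_inv_cancel, mul_one]
      rw [h2, ← mul_assoc, inv_mul_cancel, one_mul]
    have hone : α'⁻¹ * α = 1 := by
      ext p
      show (α'⁻¹ * α) p = p
      by_cases hp : p < N
      · rw [heq1]
        exact hg2 p (by simp only [Set.mem_Ico, not_and, not_le]; omega)
      · exact hg1 p (by simpa using hp)
    have hαeq : α = α' := by
      have := congrArg (α' * ·) hone
      simpa [← mul_assoc] using this
    have hβeq : β = β' := by
      apply mul_left_cancel (a := α)
      rw [h1, hαeq]
    simp only [Prod.mk.injEq, Subtype.mk.injEq]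
    exact ⟨hαeq, hβeq⟩
  have hsurj : Function.Surjective prodmap := by
    rintro ⟨⟨σ, hσG⟩, hstab⟩
    have hθlσ : θ (lft θ σ) = σ := lft_spec θ (hlift ⟨σ, hσG⟩)
    have hconj : ∀ i, lft θ σ * y₀ i * (lft θ σ)⁻¹ = y₀ i :=
      hStconj ⟨σ, hσG⟩ hstab (lft θ σ) hθlσ
    have hconjθ : ∀ i, σ * θ (y₀ i) * σ⁻¹ = θ (y₀ i) := by
      intro i
      have := congrArg θ (hconj i)
      rwa [map_mul, map_mul, map_inv, hθlσ] at this
    have himage : σ '' (Set.Iio N) = Set.Iio N := by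
      conv_lhs => rw [← hy₀union]
      rw [Set.image_iUnion]
      rw [← hy₀union]
      apply Set.iUnion_congr
      intro i
      rw [← supp_conj σ (θ (y₀ i)), hconjθ i]
    have hiff : ∀ p, p < N ↔ σ p < N := by
      intro p
      constructor
      · intro hp
        have : σ p ∈ σ '' (Set.Iio N) := ⟨p, hp, rfl⟩
        rw [himage] at this
        exact this
      · intro hp
        have : σ p ∈ Set.Iio N := hp
        rw [← himage] at this
        obtain ⟨q, hq, hqe⟩ := this
        have : q = p := σ.injective hqe
        rw [← this]
        exact hq
    set α := restr σ N hiff with hα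
    have hαfix : α ∈ pfix (Set.Iio N) := by
      intro p hp
      simp only [Set.mem_Iio, not_lt] at hp
      exact restr_ge (by omega)
    set β := α⁻¹ * σ with hβ
    have hβmem : β ∈ pfix (Set.Ico N n) := by
      intro p hp
      simp only [Set.mem_Ico, not_and, not_le] at hp
      by_cases hpN : p < N
      · show α⁻¹ (σ p) = p
        rw [Equiv.Perm.inv_eq_iff_eq]
        exact (restr_lt hpN).symm
      · have hpn : n ≤ p := by
          have := hp (by omega)
          omega
        have h1 : σ p = p := hσG p (by simpa using hpn)
        show α⁻¹ (σ p) = p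
        rw [h1, Equiv.Perm.inv_eq_iff_eq]
        exact (restr_ge hpN).symm
    have hβlift : β ∈ pfix (Set.Iio n) :=
      pfix_mono (fun p hp => by simp only [Set.mem_Ico, Set.mem_Iio] at hp ⊢; omega) hβmem
    obtain ⟨wβ, _, hwβ⟩ := exists_lift θ hθ hker hβlift
    have hαβ : α * β = σ := by rw [hβ, mul_inv_cancel_left]
    have hαSA : α ∈ SA := by
      refine ⟨hαfix, ?_⟩
      intro w hw i
      have h1 : θ w = θ (lft θ σ * wβ⁻¹) := by
        rw [hw, map_mul, map_inv, hθlσ, hwβ, hβ]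
        group
      rw [conj_eq_of_theta_eq θ hker h1 (y₀ i)]
      have h2 : wβ * y₀ i * wβ⁻¹ = y₀ i := hSBconj β hβmem wβ hwβ i
      have h3 : wβ⁻¹ * y₀ i * wβ = y₀ i := by
        conv_lhs => rw [← h2]
        group
      calc lft θ σ * wβ⁻¹ * y₀ i * (lft θ σ * wβ⁻¹)⁻¹
          = lft θ σ * (wβ⁻¹ * y₀ i * wβ) * (lft θ σ)⁻¹ := by group
        _ = lft θ σ * y₀ i * (lft θ σ)⁻¹ := by rw [h3]
        _ = y₀ i := hconj i
    refine ⟨⟨⟨α, hαSA⟩, ⟨β, hβmem⟩⟩, ?_⟩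
    rw [hprodmap]
    apply Subtype.ext
    apply Subtype.ext
    exact hαβ
  -- cardinalities
  haveI hStfin : Finite ↥St := Subtype.finite
  have hcardSt : Nat.card ↥St = k₀ * Nat.card ↥SB := by
    rw [← Nat.card_congr (Equiv.ofBijective prodmap ⟨hinj, hsurj⟩), Nat.card_prod]
  have hcardSB : Nat.card ↥SB = (n - N).factorial := by
    have h1 : Nat.card ↥(pfix (Set.Ico N n)) = Nat.factorial ((Set.Ico N n).ncard) :=
      card_pfix (Set.finite_Ico N n)
    have h2 : (Set.Ico N n).ncard = n - N := by
      rw [← Finset.coe_Ico, Set.ncard_coe_finset, Nat.card_Ico]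
    rw [← h2, ← h1]
    rfl
  have hcardG : Nat.card ↥G = n.factorial := by
    rw [hG, card_pfix (Set.finite_Iio n), ncard_Iio]
  have horbstab : Nat.card ↥(MulAction.orbit ↥G y₀) * Nat.card ↥St = Nat.card ↥G := by
    rw [← Nat.card_prod]
    exact Nat.card_congr (MulAction.orbitProdStabilizerEquivGroup ↥G y₀)
  have hkey : Set.ncard {y ∈ C | ∀ i, y i ∈ SpinSub n} * (k₀ * (n - N).factorial)
      = n.factorial := by
    rw [horb, ← Nat.card_coe_set_eq, ← hcardSB, ← hcardSt, ← hcardG]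
    exact horbstab
  have hfact : (n - N).factorial * Nat.descFactorial n N = n.factorial :=
    Nat.factorial_mul_descFactorial hn
  have hmain : Set.ncard {y ∈ C | ∀ i, y i ∈ SpinSub n} * k₀ = Nat.descFactorial n N := by
    apply Nat.eq_of_mul_eq_mul_right (Nat.factorial_pos (n - N))
    rw [mul_assoc, hkey, ← hfact, mul_comm]
  rw [eq_div_iff (by exact_mod_cast hk₀pos.ne' : (k₀ : ℚ) ≠ 0)]
  exact_mod_cast hmain
end

section
/- For every integer r ≥ 1, the following identity holds in ℚ: Σ_μ (−1)^{ℓ(μ)} · ( (2r)(2r+1)⋯(2r+ℓ(μ)−1) / ∏_{i≥1} m_i(μ)! ) · ∏_{j=1}^{ℓ(μ)} catalan(μ_j) = 2·(−1)^r, where the sum is over all partitions μ = (μ_1, …, μ_{ℓ(μ)}) of r. -/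
open Finset Nat

namespace CP

/-- `Mq k n = [x^n] C(x)^k` where `C` is the Catalan generating function. -/
def Mq : ℕ → ℕ → ℚ
  | 0, n => if n = 0 then 1 else 0
  | (k+1), n => ∑ j ∈ Finset.range (n+1), (catalan j : ℚ) * Mq k (n - j)

lemma Mq_zero (n : ℕ) : Mq 0 n = if n = 0 then 1 else 0 := rfl

lemma Mq_succ (k n : ℕ) :
    Mq (k+1) n = ∑ j ∈ Finset.range (n+1), (catalan j : ℚ) * Mq k (n - j) := rfl

lemma Mq_one (n : ℕ) : Mq 1 n = (catalan n : ℚ) := by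
  rw [Mq_succ]
  rw [Finset.sum_eq_single n]
  · simp [Mq_zero]
  · intro j hj hne
    have : n - j ≠ 0 := by simp at hj; omega
    simp [Mq_zero, this]
  · intro h; simp at h

lemma Mq_two (n : ℕ) : Mq 2 n = (catalan (n+1) : ℚ) := by
  rw [Mq_succ, catalan_succ']
  rw [Finset.Nat.sum_antidiagonal_eq_sum_range_succ (f := fun x y => (catalan x * catalan y : ℕ))]
  push_cast
  refine Finset.sum_congr rfl fun j hj => ?_
  rw [Mq_one]

/-- Triangular double-sum reindexing. -/
lemma tri (f : ℕ → ℕ → ℚ) (n : ℕ) :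
    ∑ j ∈ range (n+1), ∑ m ∈ range (n+1-j), f j m
      = ∑ s ∈ range (n+1), ∑ j ∈ range (s+1), f j (s-j) := by
  rw [Finset.sum_sigma', Finset.sum_sigma']
  refine Finset.sum_nbij' (fun x => ⟨x.1 + x.2, x.1⟩) (fun x => ⟨x.2, x.1 - x.2⟩) ?_ ?_ ?_ ?_ ?_
  · rintro ⟨a, b⟩ h
    simp only [Finset.mem_sigma, Finset.mem_range] at h ⊢
    omega
  · rintro ⟨s, j⟩ h
    simp only [Finset.mem_sigma, Finset.mem_range] at h ⊢
    omega
  · rintro ⟨a, b⟩ h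
    simp only [Finset.mem_sigma, Finset.mem_range] at h
    have hab : a + b - a = b := by omega
    simp only [hab]
  · rintro ⟨s, j⟩ h
    simp only [Finset.mem_sigma, Finset.mem_range] at h
    have hsj : j + (s - j) = s := by omega
    simp only [hsj]
  · rintro ⟨a, b⟩ h
    simp only [Finset.mem_sigma, Finset.mem_range] at h
    have : a + b - a = b := by omega
    rw [this]

lemma Mq_conv2 (k n : ℕ) :
    Mq (k+2) n = ∑ m ∈ range (n+1), Mq 2 m * Mq k (n - m) := by
  have h1 : Mq (k+2) n
      = ∑ j ∈ range (n+1), ∑ m ∈ range (n+1-j), (catalan j : ℚ) *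
          ((catalan m : ℚ) * Mq k (n - j - m)) := by
    rw [Mq_succ]
    refine Finset.sum_congr rfl fun j hj => ?_
    simp only [Finset.mem_range] at hj
    rw [Mq_succ, Finset.mul_sum]
    have : n - j + 1 = n + 1 - j := by omega
    rw [this]
  rw [h1, tri (fun j m => (catalan j : ℚ) * ((catalan m : ℚ) * Mq k (n - j - m))) n]
  refine Finset.sum_congr rfl fun s hs => ?_
  simp only [Finset.mem_range] at hs
  rw [Mq_succ, Finset.sum_mul]
  refine Finset.sum_congr rfl fun j hj => ?_
  simp only [Finset.mem_range] at hj
  have h2 : s - j ≤ s := Nat.sub_le _ _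
  have h3 : n - j - (s - j) = n - s := by omega
  rw [h3, Mq_one]
  ring

lemma Mq_rec (k n : ℕ) : Mq (k+1) (n+1) = Mq k (n+1) + Mq (k+2) n := by
  rw [Mq_succ, Finset.sum_range_succ', Mq_conv2]
  simp only [catalan_zero, Nat.cast_one, one_mul, Nat.sub_zero]
  rw [add_comm]
  congr 1
  refine Finset.sum_congr rfl fun m hm => ?_
  simp only [Finset.mem_range] at hm
  rw [Mq_two]
  have : n + 1 - (m + 1) = n - m := by omega
  rw [this]

lemma factq_ne (n : ℕ) : ((n)! : ℚ) ≠ 0 := by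
  exact_mod_cast Nat.factorial_ne_zero n

lemma catalan_q (n : ℕ) : (catalan n : ℚ) = ((2*n)! : ℚ) / ((n)! * ((n+1))!) := by
  have hd := Nat.succ_dvd_centralBinom n
  have h1 : (catalan n : ℚ) = (Nat.centralBinom n : ℚ) / ((n : ℚ) + 1) := by
    rw [catalan_eq_centralBinom_div]
    rw [Nat.cast_div hd (by exact_mod_cast Nat.succ_ne_zero n)]
    push_cast; ring
  have h2 : Nat.centralBinom n * (n)! * (n)! = (2*n)! := by
    have := Nat.choose_mul_factorial_mul_factorial (show n ≤ 2*n by omega)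
    have h3 : 2*n - n = n := by omega
    rw [h3] at this
    exact this
  have h2q : (Nat.centralBinom n : ℚ) * ((n)! : ℚ) * ((n)! : ℚ) = ((2*n)! : ℚ) := by
    exact_mod_cast congrArg (Nat.cast : ℕ → ℚ) h2
  rw [h1]
  have hf : (((n+1))! : ℚ) = ((n:ℚ)+1) * ((n)! : ℚ) := by
    rw [Nat.factorial_succ]; push_cast; ring
  rw [hf]
  field_simp at h2q ⊢
  have hn1 : ((n:ℚ)+1) ≠ 0 := by positivity
  nlinarith [h2q]

lemma Mq_at_zero : ∀ k, Mq k 0 = 1 := by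
  intro k
  induction k with
  | zero => simp [Mq_zero]
  | succ k ih => rw [Mq_succ]; simp [ih]

lemma step_alg (m k : ℕ) :
    ((k:ℚ)+1) * ((2*(m+1)+k)! : ℚ) / (((m+1))! * (((m+1)+k+1))!)
      + ((k:ℚ)+3) * ((2*m+(k+2))! : ℚ) / ((m)! * ((m+(k+2)+1))!)
    = ((k:ℚ)+2) * ((2*(m+1)+(k+1))! : ℚ) / (((m+1))! * (((m+1)+(k+1)+1))!) := by
  have e1 : 2*(m+1)+k = 2*m+k+2 := by ring
  have e2 : (m+1)+k+1 = m+k+2 := by ring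
  have e3 : 2*m+(k+2) = 2*m+k+2 := by ring
  have e4 : m+(k+2)+1 = m+k+3 := by ring
  have e5 : 2*(m+1)+(k+1) = 2*m+k+3 := by ring
  have e6 : (m+1)+(k+1)+1 = m+k+3 := by ring
  rw [e1, e2, e3, e4, e5, e6]
  have f1 : ((2*m+k+3)! : ℚ) = ((2*m+k+3 : ℕ) : ℚ) * ((2*m+k+2)! : ℚ) := by
    rw [show 2*m+k+3 = (2*m+k+2)+1 from rfl, Nat.factorial_succ]; push_cast; ring
  have f2 : ((m+k+3)! : ℚ) = ((m+k+3 : ℕ) : ℚ) * ((m+k+2)! : ℚ) := by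
    rw [show m+k+3 = (m+k+2)+1 from rfl, Nat.factorial_succ]; push_cast; ring
  have f3 : (((m+1))! : ℚ) = ((m:ℚ)+1) * ((m)! : ℚ) := by
    rw [Nat.factorial_succ]; push_cast; ring
  rw [f1, f2, f3]
  have hm : ((m)! : ℚ) ≠ 0 := factq_ne m
  have hmk : ((m+k+2)! : ℚ) ≠ 0 := factq_ne _
  have hm1 : ((m:ℚ)+1) ≠ 0 := by positivity
  push_cast
  field_simp
  ring

lemma Mq_closed : ∀ (n k : ℕ),
    Mq (k+1) n = ((k:ℚ)+1) * ((2*n+k)! : ℚ) / ((n)! * ((n+k+1))!) := by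
  intro n
  induction n using Nat.strong_induction_on with
  | _ n ih =>
    intro k
    induction k with
    | zero =>
      rw [Mq_one, catalan_q]
      norm_num
    | succ k ihk =>
      match n with
      | 0 =>
        rw [Mq_at_zero]
        rw [show (0:ℕ)+(k+1)+1 = k+2 from by ring, show 2*0+(k+1) = k+1 from by ring]
        have : ((k+2)! : ℚ) = ((k:ℚ)+2) * ((k+1)! : ℚ) := by
          rw [show k+2 = (k+1)+1 from rfl, Nat.factorial_succ]; push_cast; ring
        rw [this]
        rw [Nat.factorial_zero]
        have h1 : ((k+1)! : ℚ) ≠ 0 := factq_ne _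
        have h2 : ((k:ℚ)+2) ≠ 0 := by positivity
        push_cast
        field_simp
        ring
      | m+1 =>
        rw [show k+1+1 = (k+1)+1 from rfl, Mq_rec (k+1) m]
        rw [ihk, ih m (by omega) (k+2)]
        have := step_alg m k
        push_cast at this ⊢
        convert this using 2 <;> ring_nf

def Nq : ℕ → ℕ → ℚ
  | 0, n => if n = 0 then 1 else 0
  | (ℓ+1), n => ∑ j ∈ Finset.Icc 1 n, (catalan j : ℚ) * Nq ℓ (n - j)

lemma Nq_zero_def (n : ℕ) : Nq 0 n = if n = 0 then 1 else 0 := rfl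

lemma Nq_succ (ℓ n : ℕ) :
    Nq (ℓ+1) n = ∑ j ∈ Finset.Icc 1 n, (catalan j : ℚ) * Nq ℓ (n - j) := rfl

lemma sum_Icc_one (g : ℕ → ℚ) (n : ℕ) :
    ∑ j ∈ Finset.Icc 1 n, g j = ∑ m ∈ range n, g (m+1) := by
  rw [← Finset.Ico_add_one_right_eq_Icc, Finset.sum_Ico_eq_sum_range]
  simp [add_comm]

lemma Nq_zero_of_lt : ∀ ℓ n, n < ℓ → Nq ℓ n = 0 := by
  intro ℓ
  induction ℓ with
  | zero => intro n h; omega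
  | succ ℓ ih =>
    intro n h
    rw [Nq_succ]
    refine Finset.sum_eq_zero fun j hj => ?_
    simp only [Finset.mem_Icc] at hj
    rw [ih (n-j) (by omega)]
    ring

lemma Nq_eq_Mq : ∀ ℓ n, ℓ + 1 ≤ n → Nq (ℓ+1) n = Mq (2*(ℓ+1)) (n - (ℓ+1)) := by
  intro ℓ
  induction ℓ with
  | zero =>
    intro n h
    rw [Nq_succ, show 2*(0+1) = 2 from rfl]
    rw [Finset.sum_eq_single n]
    · rw [Nq_zero_def]
      simp only [Nat.sub_self, if_pos rfl, mul_one, Mq_two]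
      have hn1 : n - (0+1) + 1 = n := by omega
      rw [hn1]
      simp
    · intro j hj hne
      simp only [Finset.mem_Icc] at hj
      rw [Nq_zero_def, if_neg (by omega)]
      ring
    · intro hn
      simp only [Finset.mem_Icc] at hn
      omega
  | succ ℓ ih =>
    intro n h
    rw [Nq_succ]
    have hsplit : ∀ j ∈ Finset.Icc 1 n, (catalan j : ℚ) * Nq (ℓ+1) (n - j)
        = if j ≤ n - (ℓ+1) then (catalan j : ℚ) * Mq (2*(ℓ+1)) (n - j - (ℓ+1)) else 0 := by
      intro j hj
      simp only [Finset.mem_Icc] at hj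
      by_cases hc : j ≤ n - (ℓ+1)
      · rw [if_pos hc, ih (n-j) (by omega)]
      · rw [if_neg hc, Nq_zero_of_lt (ℓ+1) (n-j) (by omega)]
        ring
    rw [Finset.sum_congr rfl hsplit]
    rw [Finset.sum_ite, Finset.sum_const_zero, add_zero]
    have hfilter : Finset.filter (fun j => j ≤ n - (ℓ+1)) (Finset.Icc 1 n)
        = Finset.Icc 1 (n - (ℓ+1)) := by
      ext j
      simp only [Finset.mem_filter, Finset.mem_Icc]
      omega
    rw [hfilter]
    rw [sum_Icc_one]
    have key : ∀ m ∈ range (n - (ℓ+1)), (catalan (m+1) : ℚ) * Mq (2*(ℓ+1)) (n - (m+1) - (ℓ+1))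
        = Mq 2 m * Mq (2*(ℓ+1)) ((n - (ℓ+2)) - m) := by
      intro m hm
      simp only [Finset.mem_range] at hm
      have harg : n - (m+1) - (ℓ+1) = (n - (ℓ+2)) - m := by omega
      rw [← Mq_two, harg]
    rw [Finset.sum_congr rfl key]
    have hrange : n - (ℓ+1) = (n - (ℓ+2)) + 1 := by omega
    rw [hrange]
    rw [show 2*(ℓ+1+1) = 2*(ℓ+1)+2 from by ring]
    rw [Mq_conv2]

lemma fact_pred {t : ℕ} (h : 1 ≤ t) : ((t)! : ℚ) = (t : ℚ) * (((t-1))! : ℚ) := by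
  obtain ⟨t', rfl⟩ : ∃ t', t = t' + 1 := ⟨t - 1, by omega⟩
  rw [Nat.factorial_succ]
  push_cast
  ring

/-- `e`-terms for the telescoping sum. -/
def eqq (p q ℓ : ℕ) : ℚ :=
  (-1)^ℓ * ((p+ℓ)! : ℚ) / (((ℓ-1))! * ((q-ℓ))! * ((p+2+ℓ-q))!)

/-- `t`-terms of the main alternating sum. -/
def tqq (p q ℓ : ℕ) : ℚ :=
  (-1)^ℓ * ((p+ℓ)! : ℚ) / (((ℓ-1))! * ((q-ℓ))! * ((p+1+ℓ-q))!)

lemma esum_partial (p q : ℕ) (hq : 2 ≤ q) (hqp : q ≤ p+2) :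
    ∀ t, 1 ≤ t → t ≤ q →
    ∑ ℓ ∈ Finset.Icc 1 t, eqq p q ℓ
      = (-1)^t * ((p+t)! : ℚ) * ((q:ℚ) - t) * ((p:ℚ)+t+1)
          / (((t-1))! * ((q-t))! * ((p+2+t-q))! * (((q:ℚ)-1) * ((p:ℚ)+2))) := by
  intro t
  induction t with
  | zero => intro h; omega
  | succ t ih =>
    intro _ htq
    rcases Nat.eq_zero_or_pos t with rfl | ht1
    · -- base case t+1 = 1
      rw [Finset.Icc_self, Finset.sum_singleton]
      rw [eqq]
      have hq1 : ((q:ℚ) - 1) ≠ 0 := by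
        have : (1:ℚ) < (q:ℚ) := by exact_mod_cast hq
        intro hcon; nlinarith
      have hp2 : ((p:ℚ) + 2) ≠ 0 := by positivity
      have hc1 : ((q:ℚ) - (0+1:ℕ)) = (q:ℚ) - 1 := by push_cast; ring
      rw [hc1]
      field_simp
      ring
    · -- inductive step
      rw [Finset.sum_Icc_succ_top (by omega : 1 ≤ t+1), ih ht1 (by omega)]
      obtain ⟨a, ha⟩ : ∃ a, q - t = a + 1 := ⟨q - t - 1, by omega⟩
      obtain ⟨b, hb⟩ : ∃ b, p + 2 + t = q + b := ⟨p + 2 + t - q, by omega⟩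
      have e1 : t+1-1 = t := by omega
      have e2 : q-(t+1) = a := by omega
      have e3 : q-t = a+1 := ha
      have e4 : p+2+(t+1)-q = b+1 := by omega
      have e5 : p+2+t-q = b := by omega
      have e6 : p+(t+1) = (p+t)+1 := by omega
      have hqc : (q:ℚ) = (t:ℚ)+1+(a:ℚ) := by
        have : q = t + 1 + a := by omega
        rw [this]; push_cast; ring
      have hpc : (p:ℚ) = (a:ℚ)+(b:ℚ)-1 := by
        have h' : (p:ℚ) + 2 + t = (q:ℚ) + b := by exact_mod_cast congrArg (Nat.cast : ℕ → ℚ) hb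
        rw [hqc] at h'; linarith
      rw [eqq, e1, e2, e3, e4, e5, e6]
      have f1 : (((a+1))! : ℚ) = ((a:ℚ)+1) * ((a)! : ℚ) := by
        rw [Nat.factorial_succ]; push_cast; ring
      have f2 : (((b+1))! : ℚ) = ((b:ℚ)+1) * ((b)! : ℚ) := by
        rw [Nat.factorial_succ]; push_cast; ring
      have f3 : (((p+t)+1)! : ℚ) = ((p:ℚ)+(t:ℚ)+1) * (((p+t))! : ℚ) := by
        rw [Nat.factorial_succ]; push_cast; ring
      have f4 : ((t)! : ℚ) = (t:ℚ) * (((t-1))! : ℚ) := fact_pred ht1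
      rw [f1, f2, f3, f4, hqc, hpc]
      have n1 : (((t-1))! : ℚ) ≠ 0 := factq_ne _
      have n2 : ((a)! : ℚ) ≠ 0 := factq_ne _
      have n3 : ((b)! : ℚ) ≠ 0 := factq_ne _
      have n4 : (((p+t))! : ℚ) ≠ 0 := factq_ne _
      have n5 : (t:ℚ) ≠ 0 := by exact_mod_cast Nat.pos_iff_ne_zero.mp ht1
      have n6 : ((t:ℚ)+1+(a:ℚ)-1) ≠ 0 := by
        have : (0:ℚ) < (t:ℚ) + (a:ℚ) := by
          have : (0:ℚ) < (t:ℚ) := by exact_mod_cast ht1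
          positivity
        intro hcon; nlinarith
      have n7 : ((a:ℚ)+(b:ℚ)-1+2) ≠ 0 := by
        have ha0 : (0:ℚ) ≤ (a:ℚ) := by positivity
        have hb0 : (0:ℚ) ≤ (b:ℚ) := by positivity
        intro hcon; nlinarith
      have n8 : ((a:ℚ)+1) ≠ 0 := by positivity
      have n9 : ((b:ℚ)+1) ≠ 0 := by positivity
      rw [pow_succ]
      push_cast
      field_simp
      ring

lemma esum_zero (p q : ℕ) (hq : 2 ≤ q) (hqp : q ≤ p+2) :
    ∑ ℓ ∈ Finset.Icc 1 q, eqq p q ℓ = 0 := by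
  rw [esum_partial p q hq hqp q (by omega) le_rfl]
  rw [sub_self, mul_zero, zero_mul, zero_div]

lemma tq_step (p q ℓ : ℕ) (hℓ : 1 ≤ ℓ) (hℓq : ℓ ≤ q) (hqp : q ≤ p+1) :
    tqq p (q+1) ℓ + tqq p q ℓ = ((p:ℚ)+2) * eqq p (q+1) ℓ := by
  obtain ⟨u, hu⟩ : ∃ u, q - ℓ = u := ⟨q - ℓ, rfl⟩
  obtain ⟨v, hv⟩ : ∃ v, p + ℓ - q = v := ⟨p + ℓ - q, rfl⟩
  have e1 : q+1-ℓ = u+1 := by omega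
  have e2 : p+1+ℓ-(q+1) = v := by omega
  have e3 : p+1+ℓ-q = v+1 := by omega
  have e4 : p+2+ℓ-(q+1) = v+1 := by omega
  rw [tqq, tqq, eqq, e1, e2, e3, e4, hu]
  have hpc : (p:ℚ) = (u:ℚ)+(v:ℚ) := by
    have : p = u + v := by omega
    rw [this]; push_cast; ring
  have f1 : (((u+1))! : ℚ) = ((u:ℚ)+1) * ((u)! : ℚ) := by
    rw [Nat.factorial_succ]; push_cast; ring
  have f2 : (((v+1))! : ℚ) = ((v:ℚ)+1) * ((v)! : ℚ) := by
    rw [Nat.factorial_succ]; push_cast; ring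
  rw [f1, f2, hpc]
  have n1 : (((ℓ-1))! : ℚ) ≠ 0 := factq_ne _
  have n2 : ((u)! : ℚ) ≠ 0 := factq_ne _
  have n3 : ((v)! : ℚ) ≠ 0 := factq_ne _
  have n4 : (((p+ℓ))! : ℚ) ≠ 0 := factq_ne _
  have n5 : ((u:ℚ)+1) ≠ 0 := by positivity
  have n6 : ((v:ℚ)+1) ≠ 0 := by positivity
  field_simp
  ring

lemma tq_top (p q : ℕ) :
    tqq p (q+1) (q+1) = ((p:ℚ)+2) * eqq p (q+1) (q+1) := by
  have e1 : (q+1)-(q+1) = 0 := by omega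
  have e2 : p+1+(q+1)-(q+1) = p+1 := by omega
  have e3 : p+2+(q+1)-(q+1) = p+2 := by omega
  rw [tqq, eqq, e1, e2, e3]
  have f1 : (((p+2))! : ℚ) = ((p:ℚ)+2) * (((p+1))! : ℚ) := by
    rw [show p+2 = (p+1)+1 from rfl, Nat.factorial_succ]; push_cast; ring
  rw [f1]
  have n1 : (((q+1-1))! : ℚ) ≠ 0 := factq_ne _
  have n2 : (((p+1))! : ℚ) ≠ 0 := factq_ne _
  have n3 : ((p:ℚ)+2) ≠ 0 := by positivity
  field_simp

lemma F_val (p : ℕ) : ∀ q, 1 ≤ q → q ≤ p+1 →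
    ∑ ℓ ∈ Finset.Icc 1 q, tqq p q ℓ = (-1)^q := by
  intro q
  induction q with
  | zero => intro h; omega
  | succ q ih =>
    intro _ hqp
    rcases Nat.eq_zero_or_pos q with rfl | hq1
    · rw [Finset.Icc_self, Finset.sum_singleton, tqq]
      have e3 : p+1+1-(0+1) = p+1 := by omega
      rw [e3]
      have n2 : (((p+1))! : ℚ) ≠ 0 := factq_ne _
      norm_num
      field_simp
    · rw [Finset.sum_Icc_succ_top (by omega : 1 ≤ q+1)]
      have hpt : ∀ ℓ ∈ Finset.Icc 1 q, tqq p (q+1) ℓ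
          = ((p:ℚ)+2) * eqq p (q+1) ℓ - tqq p q ℓ := by
        intro ℓ hℓ
        simp only [Finset.mem_Icc] at hℓ
        have := tq_step p q ℓ hℓ.1 hℓ.2 (by omega)
        linarith
      rw [Finset.sum_congr rfl hpt, Finset.sum_sub_distrib, ← Finset.mul_sum]
      have he : ∑ ℓ ∈ Finset.Icc 1 q, eqq p (q+1) ℓ = - eqq p (q+1) (q+1) := by
        have h0 := esum_zero p (q+1) (by omega) (by omega)
        rw [Finset.sum_Icc_succ_top (by omega : 1 ≤ q+1)] at h0
        linarith
      rw [he, ih hq1 (by omega), tq_top p q, pow_succ]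
      ring

/-- product of factorials of multiplicities, after erasing one copy of `j`. -/
lemma countProd_erase (s : Multiset ℕ) {j : ℕ} (h : j ∈ s) :
    ∏ i ∈ s.toFinset, (s.count i)!
      = s.count j * ∏ i ∈ (s.erase j).toFinset, ((s.erase j).count i)! := by
  have hsub : (s.erase j).toFinset ⊆ s.toFinset := by
    intro i hi
    simp only [Multiset.mem_toFinset] at hi ⊢
    exact Multiset.mem_of_mem_erase hi
  have step1 : ∏ i ∈ (s.erase j).toFinset, ((s.erase j).count i)!
      = ∏ i ∈ s.toFinset, ((s.erase j).count i)! := by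
    refine Finset.prod_subset hsub ?_
    intro i hi hni
    simp only [Multiset.mem_toFinset] at hni
    rw [Multiset.count_eq_zero.mpr hni]
    rfl
  have hjf : j ∈ s.toFinset := Multiset.mem_toFinset.mpr h
  rw [step1]
  rw [← Finset.mul_prod_erase _ _ hjf, ← Finset.mul_prod_erase _ _ hjf]
  have hrest : ∏ i ∈ s.toFinset.erase j, ((s.erase j).count i)!
      = ∏ i ∈ s.toFinset.erase j, (s.count i)! := by
    refine Finset.prod_congr rfl fun i hi => ?_
    rw [Multiset.count_erase_of_ne (Finset.ne_of_mem_erase hi)]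
  rw [hrest, Multiset.count_erase_self]
  have hc : 1 ≤ s.count j := Multiset.one_le_count_iff_mem.mpr h
  rw [← Nat.mul_assoc]
  congr 1
  obtain ⟨m, hm⟩ : ∃ m, s.count j = m + 1 := ⟨s.count j - 1, by omega⟩
  rw [hm]
  simp [Nat.factorial_succ, Nat.mul_comm]

def Vq (ℓ : ℕ) (s : Multiset ℕ) : ℚ :=
  ((ℓ)! : ℚ) / (∏ i ∈ s.toFinset, ((s.count i)! : ℚ))
    * (s.map (fun p => (catalan p : ℚ))).prod

lemma Vq_def (ℓ : ℕ) (s : Multiset ℕ) : Vq ℓ s =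
  ((ℓ)! : ℚ) / (∏ i ∈ s.toFinset, ((s.count i)! : ℚ))
    * (s.map (fun p => (catalan p : ℚ))).prod := rfl

lemma prodq_ne (s : Multiset ℕ) : (∏ i ∈ s.toFinset, ((s.count i)! : ℚ)) ≠ 0 :=
  Finset.prod_ne_zero_iff.mpr fun i _ => factq_ne _

lemma Vq_erase (ℓ : ℕ) (s : Multiset ℕ) (hcard : Multiset.card s = ℓ+1) :
    Vq (ℓ+1) s = ∑ j ∈ s.toFinset, (catalan j : ℚ) * Vq ℓ (s.erase j) := by
  have hterm : ∀ j ∈ s.toFinset, (catalan j : ℚ) * Vq ℓ (s.erase j)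
      = (s.count j : ℚ) * (((ℓ)! : ℚ) / (∏ i ∈ s.toFinset, ((s.count i)! : ℚ))
          * (s.map (fun p => (catalan p : ℚ))).prod) := by
    intro j hj
    have hjs : j ∈ s := Multiset.mem_toFinset.mp hj
    have hPC : (∏ i ∈ s.toFinset, ((s.count i)! : ℚ))
        = (s.count j : ℚ) * ∏ i ∈ (s.erase j).toFinset, (((s.erase j).count i)! : ℚ) := by
      exact_mod_cast congrArg (Nat.cast : ℕ → ℚ) (countProd_erase s hjs)
    have hCC : (catalan j : ℚ) * ((s.erase j).map (fun p => (catalan p : ℚ))).prod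
        = (s.map (fun p => (catalan p : ℚ))).prod :=
      Multiset.prod_map_erase (f := fun p => (catalan p : ℚ)) hjs
    rw [Vq, ← hCC, hPC]
    have n1 : ((s.count j : ℚ)) ≠ 0 := by
      have : 1 ≤ s.count j := Multiset.one_le_count_iff_mem.mpr hjs
      exact_mod_cast Nat.pos_iff_ne_zero.mp this
    have n2 := prodq_ne (s.erase j)
    field_simp
  rw [Finset.sum_congr rfl hterm, ← Finset.sum_mul]
  have hsum : ∑ j ∈ s.toFinset, (s.count j : ℚ) = ((ℓ : ℚ) + 1) := by
    rw [← Nat.cast_sum]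
    rw [Multiset.toFinset_sum_count_eq]
    exact_mod_cast congrArg (Nat.cast : ℕ → ℚ) hcard
  rw [hsum, Vq]
  rw [Nat.factorial_succ]
  push_cast
  ring

lemma parts_mem_Icc {n : ℕ} (μ : Nat.Partition n) : μ.parts.toFinset ⊆ Finset.Icc 1 n := by
  intro j hj
  have hjs := Multiset.mem_toFinset.mp hj
  simp only [Finset.mem_Icc]
  refine ⟨μ.parts_pos hjs, ?_⟩
  rw [← μ.parts_sum]
  exact Multiset.single_le_sum (fun x _ => Nat.zero_le x) j hjs

lemma partition_sum : ∀ (ℓ n : ℕ),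
    (∑ μ : Nat.Partition n, if Multiset.card μ.parts = ℓ then Vq ℓ μ.parts else 0)
      = Nq ℓ n := by
  intro ℓ
  induction ℓ with
  | zero =>
    intro n
    rw [Nq_zero_def]
    match n with
    | 0 =>
      rw [if_pos rfl]
      rw [Fintype.sum_unique]
      simp only [Nat.Partition.partition_zero_parts, Multiset.card_zero, if_pos rfl]
      rw [Vq_def]
      simp
    | (m+1) =>
      rw [if_neg (by omega)]
      refine Finset.sum_eq_zero fun μ _ => ?_
      rw [if_neg]
      intro hc
      have h0 : μ.parts = 0 := Multiset.card_eq_zero.mp hc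
      have := μ.parts_sum
      rw [h0] at this
      simp at this
  | succ ℓ ih =>
    intro n
    have step1 : (∑ μ : Nat.Partition n,
          if Multiset.card μ.parts = ℓ+1 then Vq (ℓ+1) μ.parts else 0)
        = ∑ μ : Nat.Partition n, ∑ j ∈ Finset.Icc 1 n,
            (if Multiset.card μ.parts = ℓ+1 ∧ j ∈ μ.parts
              then (catalan j : ℚ) * Vq ℓ (μ.parts.erase j) else 0) := by
      refine Finset.sum_congr rfl fun μ _ => ?_
      by_cases hc : Multiset.card μ.parts = ℓ+1
      · rw [if_pos hc, Vq_erase ℓ μ.parts hc]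
        simp only [hc, true_and]
        rw [← Finset.sum_filter]
        have hfil : Finset.filter (fun j => j ∈ μ.parts) (Finset.Icc 1 n)
            = μ.parts.toFinset := by
          ext j
          simp only [Finset.mem_filter, Multiset.mem_toFinset]
          constructor
          · exact fun h => h.2
          · intro h
            exact ⟨parts_mem_Icc μ (Multiset.mem_toFinset.mpr h), h⟩
        rw [hfil]
      · rw [if_neg hc]
        symm
        refine Finset.sum_eq_zero fun j _ => ?_
        rw [if_neg (by tauto)]
    rw [step1, Finset.sum_comm, Nq_succ]
    refine Finset.sum_congr rfl fun j hj => ?_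
    simp only [Finset.mem_Icc] at hj
    rw [← ih (n - j), Finset.mul_sum]
    simp only [mul_ite, mul_zero]
    rw [← Finset.sum_filter, ← Finset.sum_filter]
    refine Finset.sum_bij'
      (i := fun μ hμ =>
        { parts := μ.parts.erase j
          parts_pos := fun hi => μ.parts_pos (Multiset.mem_of_mem_erase hi)
          parts_sum := by
            have hm : j ∈ μ.parts := ((Finset.mem_filter.mp hμ).2).2
            have hs := μ.parts_sum
            rw [← Multiset.cons_erase hm, Multiset.sum_cons] at hs
            omega })
      (j := fun ν hν =>
        { parts := j ::ₘ ν.parts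
          parts_pos := fun hi => by
            rcases Multiset.mem_cons.mp hi with rfl | h
            · exact hj.1
            · exact ν.parts_pos h
          parts_sum := by rw [Multiset.sum_cons, ν.parts_sum]; omega })
      ?_ ?_ ?_ ?_ ?_
    · intro μ hμ
      simp only [Finset.mem_filter, Finset.mem_univ, true_and] at hμ ⊢
      have : Multiset.card (μ.parts.erase j) = Multiset.card μ.parts - 1 :=
        Multiset.card_erase_of_mem hμ.2
      simp only [this, hμ.1]
      omega
    · intro ν hν
      simp only [Finset.mem_filter, Finset.mem_univ, true_and] at hν ⊢
      constructor
      · rw [Multiset.card_cons, hν]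
      · exact Multiset.mem_cons_self j _
    · intro μ hμ
      simp only [Finset.mem_filter, Finset.mem_univ, true_and] at hμ
      apply Nat.Partition.ext
      simp only []
      exact Multiset.cons_erase hμ.2
    · intro ν hν
      apply Nat.Partition.ext
      simp only []
      exact Multiset.erase_cons_head j ν.parts
    · intro μ hμ
      rfl

lemma card_le_sum {s : Multiset ℕ} (h : ∀ x ∈ s, 1 ≤ x) : Multiset.card s ≤ s.sum := by
  induction s using Multiset.induction with
  | empty => simp
  | cons a s ih =>
    rw [Multiset.card_cons, Multiset.sum_cons]
    have h1 : 1 ≤ a := h a (Multiset.mem_cons_self a s)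
    have h2 := ih (fun x hx => h x (Multiset.mem_cons_of_mem hx))
    omega

lemma Nq_closed (r ℓ : ℕ) (h1 : 1 ≤ ℓ) (h2 : ℓ ≤ r) :
    Nq ℓ r = 2*(ℓ:ℚ) * ((2*r-1)! : ℚ) / (((r-ℓ))! * ((r+ℓ))!) := by
  obtain ⟨ℓ', rfl⟩ : ∃ ℓ', ℓ = ℓ' + 1 := ⟨ℓ - 1, by omega⟩
  rw [Nq_eq_Mq ℓ' r h2]
  have e0 : 2*(ℓ'+1) = (2*ℓ'+1)+1 := by omega
  rw [e0, Mq_closed]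
  have e1 : 2*(r-(ℓ'+1))+(2*ℓ'+1) = 2*r-1 := by omega
  have e2 : r-(ℓ'+1)+(2*ℓ'+1)+1 = r+(ℓ'+1) := by omega
  rw [e1, e2]
  push_cast
  ring


end CP


open CP in
/-- The identity `Σ_{λ ∈ EP(2r)} A_λ P_λ(-2r) = 2(-1)^r` rewritten via `λ = 2μ` with
`μ` ranging over the partitions of `r`:
`Σ_μ (-1)^{ℓ(μ)} · ((2r)(2r+1)⋯(2r+ℓ(μ)-1) / ∏_i m_i(μ)!) · ∏_j catalan(μ_j) = 2·(-1)^r`. -/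
theorem catalan_partition_identity (r : ℕ) (hr : 1 ≤ r) :
    ∑ μ : Nat.Partition r,
      (-1 : ℚ) ^ (Multiset.card μ.parts) *
        ((Nat.ascFactorial (2 * r) (Multiset.card μ.parts) : ℚ) /
          ∏ i ∈ μ.parts.toFinset, (Nat.factorial (μ.parts.count i) : ℚ)) *
        (μ.parts.map (fun p => (catalan p : ℚ))).prod
      = 2 * (-1) ^ r := by
  have step1 : ∀ μ : Nat.Partition r,
      (-1 : ℚ) ^ (Multiset.card μ.parts) *
        ((Nat.ascFactorial (2 * r) (Multiset.card μ.parts) : ℚ) /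
          ∏ i ∈ μ.parts.toFinset, (Nat.factorial (μ.parts.count i) : ℚ)) *
        (μ.parts.map (fun p => (catalan p : ℚ))).prod
      = ∑ ℓ ∈ Finset.range (r+1),
          (if Multiset.card μ.parts = ℓ
            then ((-1:ℚ)^ℓ * ((Nat.ascFactorial (2*r) ℓ : ℚ) / ((ℓ)! : ℚ))) * Vq ℓ μ.parts
            else 0) := by
    intro μ
    rw [Finset.sum_eq_single (Multiset.card μ.parts)]
    · rw [if_pos rfl, Vq_def]
      have hne := factq_ne (Multiset.card μ.parts)
      field_simp
    · intro ℓ _ hne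
      rw [if_neg (fun hc => hne hc.symm)]
    · intro hc
      exfalso
      apply hc
      simp only [Finset.mem_range]
      have hps := μ.parts_sum
      have hcs : Multiset.card μ.parts ≤ μ.parts.sum :=
        card_le_sum (fun x hx => μ.parts_pos hx)
      omega
  rw [Finset.sum_congr rfl (fun μ _ => step1 μ), Finset.sum_comm]
  have step2 : ∀ ℓ ∈ Finset.range (r+1),
      (∑ μ : Nat.Partition r, if Multiset.card μ.parts = ℓ
          then ((-1:ℚ)^ℓ * ((Nat.ascFactorial (2*r) ℓ : ℚ) / ((ℓ)! : ℚ))) * Vq ℓ μ.parts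
          else 0)
      = ((-1:ℚ)^ℓ * ((Nat.ascFactorial (2*r) ℓ : ℚ) / ((ℓ)! : ℚ))) * Nq ℓ r := by
    intro ℓ _
    rw [← partition_sum ℓ r, Finset.mul_sum]
    refine Finset.sum_congr rfl fun μ _ => ?_
    rw [mul_ite, mul_zero]
  rw [Finset.sum_congr rfl step2]
  have hsplit : Finset.range (r+1) = insert 0 (Finset.Icc 1 r) := by
    ext x; simp only [Finset.mem_range, Finset.mem_insert, Finset.mem_Icc]; omega
  rw [hsplit, Finset.sum_insert (by simp)]
  rw [Nq_zero_def, if_neg (by omega), mul_zero, zero_add]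
  have step3 : ∀ ℓ ∈ Finset.Icc 1 r,
      ((-1:ℚ)^ℓ * ((Nat.ascFactorial (2*r) ℓ : ℚ) / ((ℓ)! : ℚ))) * Nq ℓ r
        = 2 * tqq (2*r-1) r ℓ := by
    intro ℓ hℓ
    simp only [Finset.mem_Icc] at hℓ
    rw [Nq_closed r ℓ hℓ.1 hℓ.2, tqq]
    have hasc : ((2*r-1))! * (2*r).ascFactorial ℓ = ((2*r-1+ℓ))! := by
      have := Nat.factorial_mul_ascFactorial (2*r-1) ℓ
      have e : 2*r-1+1 = 2*r := by omega
      rw [e] at this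
      exact this
    have hascq : ((2*r).ascFactorial ℓ : ℚ) = ((2*r-1+ℓ)! : ℚ) / ((2*r-1)! : ℚ) := by
      have := congrArg (Nat.cast : ℕ → ℚ) hasc
      push_cast at this
      rw [eq_div_iff (factq_ne _)]
      linear_combination this
    rw [hascq]
    have e3 : 2*r-1+1+ℓ-r = r+ℓ := by omega
    rw [e3]
    rw [fact_pred hℓ.1]
    have n1 := factq_ne (2*r-1)
    have n2 := factq_ne ℓ
    have n3 := factq_ne (ℓ-1)
    have n4 := factq_ne (r-ℓ)
    have n5 := factq_ne (r+ℓ)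
    have n6 : ((ℓ:ℚ)) ≠ 0 := by exact_mod_cast Nat.pos_iff_ne_zero.mp hℓ.1
    field_simp
  rw [Finset.sum_congr rfl step3, ← Finset.mul_sum]
  rw [F_val (2*r-1) r hr (by omega)]
end

section
/- For every integer r ≥ 1, the coefficient of x^r in the formal power series (1 − C)^{2r} ∈ ℤ[[x]] equals 2·(−1)^r. -/
/-- The generating series `C = Σ_{n ≥ 0} catalan(n) x^{n+1}` of the Catalan numbers,
as a formal power series over `ℤ`. -/
noncomputable def catalanSeries : PowerSeries ℤ :=
  PowerSeries.mk (fun n => if n = 0 then 0 else (catalan (n - 1) : ℤ))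

noncomputable def catD : PowerSeries ℤ := PowerSeries.mk fun n => (catalan n : ℤ)

lemma catD_eq : catD = 1 + PowerSeries.X * catD ^ 2 := by
  ext n
  cases n with
  | zero => simp [catD]
  | succ n =>
    rw [map_add, PowerSeries.coeff_succ_X_mul]
    simp only [catD, PowerSeries.coeff_mk, sq, PowerSeries.coeff_mul,
      PowerSeries.coeff_one, Nat.succ_ne_zero, if_false, zero_add]
    rw [catalan_succ' n]
    push_cast
    rfl

lemma catalanSeries_eq : catalanSeries = PowerSeries.X * catD := by
  ext n
  cases n with
  | zero => simp [catalanSeries, catD]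
  | succ n => simp [catalanSeries, catD, PowerSeries.coeff_succ_X_mul]

lemma cat_sq : catalanSeries ^ 2 = catalanSeries - PowerSeries.X := by
  rw [catalanSeries_eq]
  have h := catD_eq
  linear_combination (-PowerSeries.X : PowerSeries ℤ) * h

noncomputable def pser : ℕ → PowerSeries ℤ
  | 0 => 2
  | 1 => 1
  | (n + 2) => pser (n + 1) - PowerSeries.X * pser n

lemma pser_eq (n : ℕ) :
    (1 - catalanSeries) ^ n + catalanSeries ^ n = pser n := by
  induction n using Nat.twoStepInduction with
  | zero => norm_num [pser]
  | one => simp [pser]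
  | more n ih1 ih2 =>
    have hu : (1 - catalanSeries) ^ 2 = (1 - catalanSeries) - PowerSeries.X := by
      linear_combination cat_sq
    rw [pser, ← ih2, ← ih1]
    have e1 : (1 - catalanSeries) ^ (n + 2) = (1 - catalanSeries) ^ n * (1 - catalanSeries) ^ 2 := by
      ring
    have e2 : catalanSeries ^ (n + 2) = catalanSeries ^ n * catalanSeries ^ 2 := by ring
    rw [e1, e2, hu, cat_sq]
    ring

lemma pser_vanish (n : ℕ) : ∀ k, n < 2 * k → PowerSeries.coeff k (pser n) = 0 := by
  induction n using Nat.twoStepInduction with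
  | zero =>
    intro k hk
    have hk' : k ≠ 0 := by omega
    rw [show (pser 0 : PowerSeries ℤ) = PowerSeries.C 2 from (map_ofNat _ 2).symm, PowerSeries.coeff_C, if_neg hk']
  | one =>
    intro k hk
    have hk' : k ≠ 0 := by omega
    simp [pser, PowerSeries.coeff_one, hk']
  | more n ih1 ih2 =>
    intro k hk
    obtain ⟨m, rfl⟩ : ∃ m, k = m + 1 := ⟨k - 1, by omega⟩
    rw [pser, map_sub, PowerSeries.coeff_succ_X_mul, ih2 (m + 1) (by omega),
      ih1 m (by omega), sub_zero]

lemma pser_top : ∀ r : ℕ,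
    PowerSeries.coeff r (pser (2 * r)) = 2 * (-1) ^ r ∧
    PowerSeries.coeff r (pser (2 * r + 1)) = (2 * r + 1) * (-1) ^ r := by
  intro r
  induction r with
  | zero => constructor <;> simp [pser, PowerSeries.coeff_zero_eq_constantCoeff, map_ofNat]
  | succ r ih =>
    have h2 : 2 * (r + 1) = 2 * r + 1 + 1 := by ring
    have h3 : 2 * (r + 1) + 1 = 2 * r + 2 + 1 := by ring
    constructor
    · rw [h2, pser, map_sub, PowerSeries.coeff_succ_X_mul,
        pser_vanish (2 * r + 1) (r + 1) (by omega), ih.1]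
      ring
    · have he : PowerSeries.coeff (r + 1) (pser (2 * (r + 1))) = 2 * (-1) ^ (r + 1) := by
        rw [h2, pser, map_sub, PowerSeries.coeff_succ_X_mul,
          pser_vanish (2 * r + 1) (r + 1) (by omega), ih.1]
        ring
      rw [h3, pser, map_sub, PowerSeries.coeff_succ_X_mul, ← h2, he, ih.2]
      push_cast; ring

/-- For every `r ≥ 1`, the coefficient of `x^r` in `(1 - C)^{2r}` equals `2·(-1)^r`. -/
theorem coeff_one_sub_catalanSeries_pow (r : ℕ) (hr : 1 ≤ r) :
    PowerSeries.coeff r ((1 - catalanSeries) ^ (2 * r)) = 2 * (-1) ^ r := by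
  have h := pser_eq (2 * r)
  have hc : PowerSeries.coeff r (catalanSeries ^ (2 * r)) = 0 := by
    rw [catalanSeries_eq, mul_pow, PowerSeries.coeff_X_pow_mul',
      if_neg (by omega)]
  have := congrArg (PowerSeries.coeff r) h
  rw [map_add, hc, add_zero] at this
  rw [this, (pser_top r).1]
end
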